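/- arXiv:2209.06838 — 10 statements merged into one kernel-verified Lean document; each statement's English description precedes it below -/
import Mathlib

section
/- Let ℓ ≥ 1 and let f(r) = Σ_{d=ℓ+1}^{2ℓ} α_d r^d be a polynomial with real coefficients satisfying f(r) - f(1-r) = 2r - 1 for all real r. Then the coefficients are uniquely determined and given by α_d = 2(-1)^{d-ℓ-1} · C(2ℓ-1, ℓ-1) · C(ℓ, d-ℓ-1) · (2ℓ-d+1)/((d-1)d). -/
open Finset Polynomial Nat

lemma betaSum (n : ℕ) : ∀ m : ℕ,
    ∑ j ∈ range (n+1), (-1:ℝ)^j * (n.choose j) / (m+1+j)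
      = (n ! : ℝ) * (m !) / ((m+n+1)!) := by
  induction n with
  | zero =>
    intro m
    simp [Nat.factorial_succ]
    field_simp
  | succ n ih =>
    intro m
    have key : ∑ j ∈ range (n+2), (-1:ℝ)^j * ((n+1).choose j) / (m+1+j)
        = (∑ j ∈ range (n+2), (-1:ℝ)^j * (n.choose j) / (m+1+j))
          - ∑ j ∈ range (n+1), (-1:ℝ)^j * (n.choose j) / ((m+1)+1+j) := by
      rw [eq_sub_iff_add_eq,
          Finset.sum_range_succ' (fun j => (-1:ℝ)^j * ((n+1).choose j) / (m+1+j)) (n+1),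
          Finset.sum_range_succ' (fun j => (-1:ℝ)^j * (n.choose j) / (m+1+j)) (n+1),
          add_right_comm]
      congr 1
      swap
      · norm_num
      rw [← Finset.sum_add_distrib]
      apply Finset.sum_congr rfl
      intro k hk
      rw [Nat.choose_succ_succ]
      push_cast
      have h1 : (m:ℝ)+1+(k+1) ≠ 0 := by positivity
      have h2 : (m:ℝ)+1+1+k ≠ 0 := by positivity
      field_simp
      ring
    have ext : ∑ j ∈ range (n+2), (-1:ℝ)^j * (n.choose j) / (m+1+j)
        = ∑ j ∈ range (n+1), (-1:ℝ)^j * (n.choose j) / (m+1+j) := by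
      rw [Finset.sum_range_succ]
      simp [Nat.choose_eq_zero_of_lt]
    have ih' := ih (m+1)
    push_cast at ih'
    rw [key, ext, ih m, ih']
    have e1 : m+1+n+1 = (m+n+1)+1 := by omega
    have e2 : m+(n+1)+1 = (m+n+1)+1 := by omega
    rw [e1, e2, Nat.factorial_succ (m+n+1), Nat.factorial_succ n, Nat.factorial_succ m]
    have h3 : ((m+n+1)! : ℝ) ≠ 0 := by positivity
    push_cast
    field_simp
    ring

lemma coeff_one_sub_X_pow (n k : ℕ) :
    ((1 - X : ℝ[X])^n).coeff k = (-1)^k * n.choose k := by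
  have h : ((1:ℝ[X]) - X)^n = ∑ i ∈ range (n+1), C ((-1:ℝ)^i * n.choose i) * X^i := by
    rw [sub_eq_add_neg, add_comm, add_pow]
    apply Finset.sum_congr rfl
    intro i hi
    rw [neg_pow]
    simp only [one_pow, mul_one, map_mul, map_pow, map_neg, map_one, map_natCast]
    ring
  rw [h, finset_sum_coeff]
  simp only [coeff_C_mul, coeff_X_pow, mul_ite, mul_one, mul_zero]
  rw [Finset.sum_ite_eq (range (n+1)) k (fun i => (-1:ℝ)^i * n.choose i)]
  by_cases hk : k ≤ n
  · simp [Finset.mem_range, Nat.lt_succ_of_le hk]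
  · rw [Nat.choose_eq_zero_of_lt (by omega)]
    simp [Finset.mem_range, show ¬ k < n+1 by omega]

theorem stmt0 (ℓ : ℕ) (hℓ : 1 ≤ ℓ) (α : ℕ → ℝ)
    (hf : ∀ r : ℝ,
      (∑ d ∈ Finset.Icc (ℓ + 1) (2 * ℓ), α d * r ^ d) -
        (∑ d ∈ Finset.Icc (ℓ + 1) (2 * ℓ), α d * (1 - r) ^ d) = 2 * r - 1) :
    ∀ d ∈ Finset.Icc (ℓ + 1) (2 * ℓ),
      α d = 2 * (-1 : ℝ) ^ (d - ℓ - 1) * (Nat.choose (2 * ℓ - 1) (ℓ - 1) : ℝ) *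
        (Nat.choose ℓ (d - ℓ - 1) : ℝ) * (2 * ℓ - d + 1) / ((d - 1) * d) := by
  obtain ⟨L, rfl⟩ : ∃ L, ℓ = L + 1 := ⟨ℓ - 1, by omega⟩
  clear hℓ
  have hn1 : L + 1 + 1 = L + 2 := by omega
  have hn2 : 2 * (L + 1) = 2 * L + 2 := by omega
  rw [hn1, hn2] at hf
  rw [hn1, hn2]
  set I : Finset ℕ := Finset.Icc (L + 2) (2 * L + 2) with hI
  set P : ℝ[X] := ∑ d ∈ I, C (α d) * X ^ d with hPdef
  -- polynomial identity
  have hP : P - P.comp (1 - X) = C 2 * X - C 1 := by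
    apply Polynomial.funext
    intro r
    have h1 : eval r P = ∑ d ∈ I, α d * r ^ d := by
      simp [hPdef, eval_finset_sum]
    have h2 : eval r (P.comp (1 - X)) = ∑ d ∈ I, α d * (1 - r) ^ d := by
      rw [eval_comp]
      simp [hPdef, eval_finset_sum]
    simp only [eval_sub, h1, h2, eval_mul, eval_C, eval_X, eval_one]
    exact hf r
  -- coefficients of P
  have hPcoeff : ∀ k, P.coeff k = if k ∈ I then α k else 0 := by
    intro k
    rw [hPdef, finset_sum_coeff]
    simp only [coeff_C_mul, coeff_X_pow, mul_ite, mul_one, mul_zero]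
    rw [Finset.sum_ite_eq I k (fun d => α d)]
  -- first derivative identity
  have hD : derivative P + (derivative P).comp (1 - X) = C 2 := by
    have := congrArg derivative hP
    rw [derivative_sub, derivative_comp] at this
    simp only [derivative_sub, derivative_one, derivative_X, derivative_mul,
      derivative_C, zero_mul, mul_one, zero_add, zero_sub, mul_comm] at this
    linear_combination this
  -- second derivative: symmetric
  set Q : ℝ[X] := derivative (derivative P) with hQdef
  have hQsymm : Q.comp (1 - X) = Q := by
    have := congrArg derivative hD
    rw [derivative_add, derivative_comp] at this
    simp only [derivative_sub, derivative_one, derivative_X, derivative_C,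
      zero_sub] at this
    have h2 : derivative (derivative P) - (derivative (derivative P)).comp (1-X) = 0 := by
      linear_combination this
    rw [sub_eq_zero] at h2
    exact h2.symm
  -- Q is c * X^L * (1-X)^L
  have hQexists : ∃ c : ℝ, Q = C c * (X ^ L * (1 - X) ^ L) := by
    have hQcoeff : ∀ k, Q.coeff k = P.coeff (k+2) * ((k:ℝ)+2) * ((k:ℝ)+1) := by
      intro k
      rw [hQdef, coeff_derivative, coeff_derivative]
      push_cast
      ring
    have hlow : ∀ k < L, Q.coeff k = 0 := by
      intro k hk
      rw [hQcoeff, hPcoeff]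
      have : k + 2 ∉ I := by simp [hI, Finset.mem_Icc]; omega
      simp [this]
    have hdvd1 : (X:ℝ[X]) ^ L ∣ Q := (X_pow_dvd_iff).2 hlow
    obtain ⟨R, hR⟩ := id hdvd1
    have hdvd2 : ((1 - X :ℝ[X])) ^ L ∣ Q := by
      refine ⟨R.comp (1 - X), ?_⟩
      conv_lhs => rw [← hQsymm, hR]
      rw [mul_comp, pow_comp, X_comp]
    have hcop : IsCoprime ((X:ℝ[X])^L) ((1-X:ℝ[X])^L) :=
      IsCoprime.pow ⟨1, 1, by ring⟩
    have hdvd : (X:ℝ[X])^L * (1-X)^L ∣ Q := hcop.mul_dvd hdvd1 hdvd2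
    have hPdeg : P.natDegree ≤ 2*L+2 := by
      rw [natDegree_le_iff_coeff_eq_zero]
      intro m hm
      rw [hPcoeff]
      have : m ∉ I := by simp [hI, Finset.mem_Icc]; omega
      simp [this]
    have hQdeg : Q.natDegree ≤ 2*L := by
      rw [hQdef]
      calc (derivative (derivative P)).natDegree ≤ (derivative P).natDegree - 1 :=
            natDegree_derivative_le _
        _ ≤ (P.natDegree - 1) - 1 := by
            have := natDegree_derivative_le P; omega
        _ ≤ 2*L := by omega
    obtain ⟨S, hS⟩ := hdvd
    by_cases hQ0 : Q = 0
    · exact ⟨0, by simp [hQ0]⟩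
    have hD0 : ((X:ℝ[X])^L * (1-X)^L) ≠ 0 := by
      apply mul_ne_zero <;> apply pow_ne_zero
      · exact X_ne_zero
      · intro h
        have := congrArg (fun p => Polynomial.coeff p 0) h
        simp at this
    have hS0 : S ≠ 0 := by rintro rfl; simp at hS; exact hQ0 hS
    have hdegD : ((X:ℝ[X])^L * (1-X)^L).natDegree = 2*L := by
      rw [natDegree_mul (pow_ne_zero _ X_ne_zero) (by
        apply pow_ne_zero
        intro h
        have := congrArg (fun p => Polynomial.coeff p 0) h
        simp at this), natDegree_pow, natDegree_pow, natDegree_X]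
      have : (1 - X : ℝ[X]).natDegree = 1 := by
        rw [show (1 - X : ℝ[X]) = -(X - C 1) by simp, natDegree_neg, natDegree_X_sub_C]
      rw [this]; ring
    have hdegS : S.natDegree = 0 := by
      have := natDegree_mul hD0 hS0
      rw [← hS, hdegD] at this
      omega
    refine ⟨S.coeff 0, ?_⟩
    conv_lhs => rw [hS, eq_C_of_natDegree_eq_zero hdegS]
    ring
  obtain ⟨c, hQc⟩ := hQexists
  -- coefficient extraction
  have hα : ∀ j ≤ L, α (L+2+j) * (((L:ℝ)+1+j) * ((L:ℝ)+2+j))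
      = c * ((-1)^j * (L.choose j)) := by
    intro j hj
    have h1 : Q.coeff (L+j) = P.coeff (L+j+2) * ((L:ℝ)+j+2) * ((L:ℝ)+j+1) := by
      rw [hQdef, coeff_derivative, coeff_derivative]
      push_cast
      ring
    have h2 : Q.coeff (L+j) = c * ((-1)^j * (L.choose j)) := by
      rw [hQc, coeff_C_mul, show L + j = j + L by ring, coeff_X_pow_mul,
          coeff_one_sub_X_pow]
    have h3 : P.coeff (L+j+2) = α (L+2+j) := by
      rw [hPcoeff]
      have : L+j+2 ∈ I := by simp [hI, Finset.mem_Icc]; omega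
      rw [if_pos this, show L+j+2 = L+2+j by ring]
    rw [h1, h3] at h2
    rw [← h2]
    ring
  -- sum rule: ∑ α d * d = 2
  have hsum : ∑ d ∈ I, α d * d = 2 := by
    have h1 := congrArg (eval 1) hD
    rw [eval_add, eval_comp, eval_C] at h1
    simp only [eval_sub, eval_one, eval_X, sub_self] at h1
    have h0 : eval 0 (derivative P) = 0 := by
      rw [← Polynomial.coeff_zero_eq_eval_zero, coeff_derivative, hPcoeff]
      have : (1:ℕ) ∉ I := by simp [hI]
      simp [this]
    have he : eval 1 (derivative P) = ∑ d ∈ I, α d * d := by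
      rw [hPdef, derivative_sum]
      simp only [derivative_C_mul, derivative_X_pow]
      rw [eval_finset_sum]
      apply Finset.sum_congr rfl
      intro d hd
      simp
    rw [he, h0, add_zero] at h1
    exact h1
  -- pin down c
  have hre : ∑ d ∈ I, α d * d = c * ((L ! : ℝ) * (L !) / ((2*L+1)!)) := by
    rw [hI, ← Finset.Ico_add_one_right_eq_Icc, Finset.sum_Ico_eq_sum_range,
        show 2*L+2+1 - (L+2) = L+1 by omega,
        show 2*L+1 = L+L+1 by omega, ← betaSum L L, Finset.mul_sum]
    apply Finset.sum_congr rfl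
    intro j hj
    rw [Finset.mem_range] at hj
    have h := hα j (by omega)
    have h1 : ((L:ℝ)+1+j) ≠ 0 := by positivity
    have h2 : ((L:ℝ)+2+j) ≠ 0 := by positivity
    push_cast
    field_simp
    linear_combination h
  have hc : c * ((L ! : ℝ) * (L !) / ((2*L+1)!)) = 2 := by rw [← hre, hsum]
  have hfq : ((2*L+1)! : ℝ) ≠ 0 := by positivity
  have hfL : ((L !) : ℝ) ≠ 0 := by positivity
  have hcval : c = 2 * ((2*L+1)! : ℝ) / ((L !) * (L !)) := by
    field_simp at hc ⊢
    linear_combination hc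
  -- final computation
  intro d hd
  rw [Finset.mem_Icc] at hd
  obtain ⟨j, rfl⟩ : ∃ j, d = L+2+j := ⟨d - (L+2), by omega⟩
  have hjL : j ≤ L := by omega
  have h := hα j hjL
  rw [hcval] at h
  have e1 : L+2+j - (L+1) - 1 = j := by omega
  have e2 : 2*L+2 - 1 = 2*L+1 := by omega
  have e3 : (L+1) - 1 = L := by omega
  rw [e1, e2, e3]
  have h1 : ((L:ℝ)+1+j) ≠ 0 := by positivity
  have h2 : ((L:ℝ)+2+j) ≠ 0 := by positivity
  have hA : α (L+2+j)
      = 2 * ((2*L+1)! : ℝ) / ((L !) * (L !)) * ((-1)^j * (L.choose j))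
        / (((L:ℝ)+1+j) * ((L:ℝ)+2+j)) := by
    field_simp at h ⊢
    linear_combination h
  rw [hA]
  have hch1 : ((2*L+1).choose L : ℝ) = ((2*L+1)! : ℝ) / ((L !) * ((L+1)!)) := by
    rw [Nat.cast_choose ℝ (by omega : L ≤ 2*L+1), show 2*L+1-L = L+1 by omega]
  have hch2 : ((L+1).choose j : ℝ) = ((L+1)! : ℝ) / ((j !) * ((L+1-j)!)) := by
    rw [Nat.cast_choose ℝ (by omega : j ≤ L+1)]
  have hch3 : ((L).choose j : ℝ) = ((L)! : ℝ) / ((j !) * ((L-j)!)) := by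
    rw [Nat.cast_choose ℝ hjL]
  have hfs1 : ((L+1-j)! : ℝ) = ((L:ℝ)+1-j) * ((L-j)!) := by
    rw [show L+1-j = (L-j)+1 by omega, Nat.factorial_succ]
    push_cast [Nat.cast_sub hjL]
    ring
  have hfs2 : ((L+1)! : ℝ) = ((L:ℝ)+1) * ((L)!) := by
    rw [Nat.factorial_succ]; push_cast; ring
  have hfj : ((j !) : ℝ) ≠ 0 := by positivity
  have hfLj : (((L-j)!) : ℝ) ≠ 0 := by positivity
  have hLj : ((L:ℝ)+1-j) ≠ 0 := by
    have : (j:ℝ) ≤ L := by exact_mod_cast hjL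
    nlinarith
  rw [hch1, hch2, hch3, hfs1, hfs2]
  push_cast
  have hden : ((L:ℝ)+2+(j:ℝ)-1) * ((L:ℝ)+2+(j:ℝ)) ≠ 0 := by
    have hee : ((L:ℝ)+2+(j:ℝ)-1) = (L:ℝ)+1+(j:ℝ) := by ring
    rw [hee]; exact mul_ne_zero h1 h2
  rw [div_eq_div_iff (mul_ne_zero h1 h2) hden]
  field_simp
  ring
end

section
/- Let ℓ ≥ 1 and let g(r) = Σ_{d=ℓ}^{2ℓ} β_d r^d be a real polynomial with nonzero coefficients only in degrees ℓ through 2ℓ. If g(r) = g(1-r) for all real r, then g(r) = β_{2ℓ} · (-1)^ℓ · (r(1-r))^ℓ. -/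
open Polynomial

theorem stmt1 (ℓ : ℕ) (hℓ : 1 ≤ ℓ) (β : ℕ → ℝ)
    (hsym : ∀ r : ℝ,
      (∑ d ∈ Finset.Icc ℓ (2 * ℓ), β d * r ^ d) =
        ∑ d ∈ Finset.Icc ℓ (2 * ℓ), β d * (1 - r) ^ d) :
    ∀ r : ℝ,
      (∑ d ∈ Finset.Icc ℓ (2 * ℓ), β d * r ^ d) =
        β (2 * ℓ) * (-1 : ℝ) ^ ℓ * (r * (1 - r)) ^ ℓ := by
  set P : ℝ[X] := ∑ d ∈ Finset.Icc ℓ (2 * ℓ), C (β d) * X ^ d with hP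
  have heval : ∀ r : ℝ, P.eval r = ∑ d ∈ Finset.Icc ℓ (2 * ℓ), β d * r ^ d := by
    intro r; simp [hP, eval_finset_sum]
  have hcoeff : ∀ k, P.coeff k = if k ∈ Finset.Icc ℓ (2 * ℓ) then β k else 0 := by
    intro k
    rw [hP, Polynomial.finset_sum_coeff]
    simp only [coeff_C_mul, coeff_X_pow, mul_ite, mul_one, mul_zero]
    rw [Finset.sum_ite_eq (Finset.Icc ℓ (2 * ℓ)) k β]
  have hsymP : P = P.comp (1 - X) := by
    apply Polynomial.funext
    intro r
    simp only [eval_comp, eval_sub, eval_one, eval_X]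
    rw [heval, heval]
    exact hsym r
  have hXdvd : (X : ℝ[X]) ^ ℓ ∣ P := by
    rw [Polynomial.X_pow_dvd_iff]
    intro d hd
    rw [hcoeff, if_neg]
    simp only [Finset.mem_Icc]
    omega
  obtain ⟨c, hc⟩ := hXdvd
  have h1Xdvd : ((1 : ℝ[X]) - X) ^ ℓ ∣ P := by
    refine ⟨c.comp (1 - X), ?_⟩
    conv_lhs => rw [hsymP, hc]
    simp [mul_comp, pow_comp]
  have hcop : IsCoprime ((X : ℝ[X]) ^ ℓ) ((1 - X) ^ ℓ) := by
    apply IsCoprime.pow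
    exact ⟨1, 1, by ring⟩
  obtain ⟨q, hq⟩ := hcop.mul_dvd ⟨c, hc⟩ h1Xdvd
  -- facts about f := X^ℓ * (1-X)^ℓ
  have h1Xeq : ((1 : ℝ[X]) - X) = -(X - C 1) := by rw [map_one]; ring
  have hlead1X : ((1 : ℝ[X]) - X).leadingCoeff = -1 := by
    rw [h1Xeq, leadingCoeff_neg, leadingCoeff_X_sub_C]
  have hdeg1X : ((1 : ℝ[X]) - X).natDegree = 1 := by
    rw [h1Xeq, natDegree_neg, natDegree_X_sub_C]
  have h1X0 : ((1 : ℝ[X]) - X) ≠ 0 := by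
    intro h; rw [h, leadingCoeff_zero] at hlead1X; norm_num at hlead1X
  have hf0 : ((X : ℝ[X]) ^ ℓ * (1 - X) ^ ℓ) ≠ 0 :=
    mul_ne_zero (pow_ne_zero _ X_ne_zero) (pow_ne_zero _ h1X0)
  have hfdeg : ((X : ℝ[X]) ^ ℓ * (1 - X) ^ ℓ).natDegree = 2 * ℓ := by
    rw [natDegree_mul (pow_ne_zero _ X_ne_zero) (pow_ne_zero _ h1X0),
      natDegree_pow, natDegree_pow, natDegree_X, hdeg1X]
    ring
  have hflead : ((X : ℝ[X]) ^ ℓ * (1 - X) ^ ℓ).leadingCoeff = (-1) ^ ℓ := by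
    rw [leadingCoeff_mul, leadingCoeff_pow, leadingCoeff_pow, hlead1X, leadingCoeff_X]
    simp
  have hPdeg : P.natDegree ≤ 2 * ℓ := by
    rw [natDegree_le_iff_coeff_eq_zero]
    intro d hd
    rw [hcoeff, if_neg]
    simp only [Finset.mem_Icc]
    omega
  have hβtop : P.coeff (2 * ℓ) = β (2 * ℓ) := by
    rw [hcoeff, if_pos]
    simp only [Finset.mem_Icc]
    omega
  by_cases hP0 : P = 0
  · intro r
    have h1 : β (2 * ℓ) = 0 := by rw [← hβtop, hP0, coeff_zero]
    have h2 := heval r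
    rw [hP0, eval_zero] at h2
    rw [← h2, h1]; ring
  · have hq0 : q ≠ 0 := by rintro rfl; rw [mul_zero] at hq; exact hP0 hq
    have hqdeg : q.natDegree = 0 := by
      have := natDegree_mul hf0 hq0
      rw [← hq, hfdeg] at this
      omega
    obtain ⟨a, rfl⟩ : ∃ a : ℝ, q = C a := ⟨q.coeff 0, (Polynomial.eq_C_of_natDegree_eq_zero hqdeg)⟩
    have hcoefftop : P.coeff (2 * ℓ) = (-1) ^ ℓ * a := by
      rw [hq, coeff_mul_C, ← hfdeg, coeff_natDegree, hflead]
    have ha : a = (-1 : ℝ) ^ ℓ * β (2 * ℓ) := by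
      have h2 : ((-1 : ℝ) ^ ℓ) * ((-1 : ℝ) ^ ℓ) = 1 := by
        rw [← mul_pow]; norm_num
      rw [← hβtop, hcoefftop, ← mul_assoc, h2, one_mul]
    intro r
    have := heval r
    rw [hq] at this
    simp only [eval_mul, eval_pow, eval_C, eval_sub, eval_one, eval_X] at this
    rw [← this, ha, mul_pow]
    ring
end

section
/- Let d ≥ 1 and let f(r) = Σ_{j=d+1}^{2d} γ_j r^j be a real polynomial with nonzero coefficients only in degrees d+1 through 2d. If f(r) = f(1-r) for all real r, then f is the zero polynomial. -/
open Polynomial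

theorem stmt2 (d : ℕ) (hd : 1 ≤ d) (γ : ℕ → ℝ)
    (hsym : ∀ r : ℝ,
      (∑ j ∈ Finset.Icc (d + 1) (2 * d), γ j * r ^ j) =
        ∑ j ∈ Finset.Icc (d + 1) (2 * d), γ j * (1 - r) ^ j) :
    ∀ r : ℝ, (∑ j ∈ Finset.Icc (d + 1) (2 * d), γ j * r ^ j) = 0 := by
  set P : ℝ[X] := ∑ j ∈ Finset.Icc (d + 1) (2 * d), C (γ j) * X ^ j with hP
  have hev : ∀ r : ℝ, P.eval r = ∑ j ∈ Finset.Icc (d + 1) (2 * d), γ j * r ^ j := by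
    intro r; simp [hP, eval_finset_sum]
  -- P = P.comp (1 - X)
  have hcomp : P = P.comp (1 - X) := by
    apply Polynomial.funext
    intro r
    rw [eval_comp]
    simp only [eval_sub, eval_one, eval_X]
    rw [hev, hev, hsym]
  -- X^(d+1) ∣ P
  have hX : (X : ℝ[X]) ^ (d + 1) ∣ P := by
    apply Finset.dvd_sum
    intro j hj
    exact Dvd.dvd.mul_left (pow_dvd_pow X (Finset.mem_Icc.mp hj).1) _
  -- (1 - X)^(d+1) ∣ P
  have h1X : ((1 : ℝ[X]) - X) ^ (d + 1) ∣ P := by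
    obtain ⟨Q, hQ⟩ := hX
    rw [hcomp, hQ]
    exact ⟨Q.comp (1 - X), by simp [mul_comp]⟩
  -- coprime
  have hcop : IsCoprime ((X : ℝ[X]) ^ (d + 1)) (((1 : ℝ[X]) - X) ^ (d + 1)) :=
    IsCoprime.pow ⟨1, 1, by ring⟩
  have hdvd : (X : ℝ[X]) ^ (d + 1) * ((1 : ℝ[X]) - X) ^ (d + 1) ∣ P :=
    hcop.mul_dvd hX h1X
  have hPdeg : P.natDegree ≤ 2 * d := by
    apply Polynomial.natDegree_sum_le_of_forall_le
    intro j hj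
    exact (natDegree_C_mul_le _ _).trans
      ((natDegree_X_pow j).le.trans (Finset.mem_Icc.mp hj).2)
  have hP0 : P = 0 := by
    by_contra h
    have h1 : ((1 : ℝ[X]) - X) ≠ 0 := by
      intro hc
      have := congrArg (eval 0) hc
      simp at this
    have hne : (X : ℝ[X]) ^ (d + 1) * ((1 : ℝ[X]) - X) ^ (d + 1) ≠ 0 :=
      mul_ne_zero (pow_ne_zero _ X_ne_zero) (pow_ne_zero _ h1)
    have hle := Polynomial.natDegree_le_of_dvd hdvd h
    rw [natDegree_mul (pow_ne_zero _ X_ne_zero) (pow_ne_zero _ h1),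
      natDegree_pow, natDegree_pow, natDegree_X] at hle
    have h1X' : ((1 : ℝ[X]) - X).natDegree = 1 := by
      rw [show ((1:ℝ[X]) - X) = -(X - C 1) by simp, natDegree_neg, natDegree_X_sub_C]
    rw [h1X'] at hle
    omega
  intro r
  rw [← hev, hP0, eval_zero]
end

section
/- For every ℓ ≥ 1, the determinant of the ℓ×ℓ matrix C with entries C_{ij} = binom(ℓ+i, j) for 1 ≤ i, j ≤ ℓ equals binom(2ℓ, ℓ). In particular it is nonzero. -/
open Finset Matrix


lemma key (m : ℕ) : ∀ (a n : ℕ), a ≤ m + n →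
    ∑ j ∈ Finset.range (n+1), (-1:ℤ)^j * (Nat.choose a j) * (Nat.choose (m + n - j) m)
      = (Nat.choose (m + n - a) n : ℤ) := by
  intro a
  induction a with
  | zero =>
    intro n _
    rw [Finset.sum_eq_single 0]
    · have h := Nat.choose_symm (Nat.le_add_left n m)
      simp only [Nat.add_sub_cancel] at h
      simp [h]
    · intro b _ hb
      simp [Nat.choose_eq_zero_of_lt (Nat.pos_of_ne_zero hb)]
    · simp
  | succ a ih =>
    intro n hn
    match n with
    | 0 =>
      simp [Nat.choose_eq_zero_of_lt (Nat.pos_of_ne_zero (by omega : a + 1 ≠ 0))] at *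
    | (n'+1) =>
      have step : ∑ j ∈ Finset.range (n'+2), (-1:ℤ)^j * (Nat.choose (a+1) j) * (Nat.choose (m + (n'+1) - j) m)
          = ∑ j ∈ Finset.range (n'+2), (-1:ℤ)^j * (Nat.choose a j) * (Nat.choose (m + (n'+1) - j) m)
            - ∑ j ∈ Finset.range (n'+1), (-1:ℤ)^j * (Nat.choose a j) * (Nat.choose (m + n' - j) m) := by
        rw [Finset.sum_range_succ' (fun j => (-1:ℤ)^j * (Nat.choose (a+1) j) * (Nat.choose (m + (n'+1) - j) m)) (n'+1),
            Finset.sum_range_succ' (fun j => (-1:ℤ)^j * (Nat.choose a j) * (Nat.choose (m + (n'+1) - j) m)) (n'+1)]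
        simp only [Nat.choose_succ_succ, Nat.choose_zero_right]
        push_cast
        have harg : ∀ i : ℕ, m + (n'+1) - (i+1) = m + n' - i := by omega
        simp only [harg]
        rw [Finset.sum_congr rfl (fun i _ => by ring :
          ∀ i ∈ Finset.range (n'+1), (-1:ℤ)^(i+1) * ((Nat.choose a i : ℤ) + (Nat.choose a (i+1) : ℤ)) * (Nat.choose (m + n' - i) m)
            = (-1:ℤ)^(i+1) * (Nat.choose a (i+1) : ℤ) * (Nat.choose (m + n' - i) m)
              + (-((-1:ℤ)^i * (Nat.choose a i : ℤ) * (Nat.choose (m + n' - i) m)))), Finset.sum_add_distrib,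
          Finset.sum_neg_distrib]
        ring
      rw [step, ih (n'+1) (by omega), ih n' (by omega)]
      have h1 : m + (n'+1) - a = (m + n' - a) + 1 := by omega
      rw [h1, Nat.choose_succ_succ]
      have h2 : m + (n'+1) - (a+1) = m + n' - a := by omega
      rw [h2]
      push_cast
      ring

section
variable (m n : ℕ)

def Amat : Matrix (Fin (n+1)) (Fin (n+1)) ℤ := Matrix.of fun i j => (Nat.choose (m + i) j : ℤ)
def Lmat : Matrix (Fin (n+1)) (Fin (n+1)) ℤ := Matrix.of fun i k => (Nat.choose i k : ℤ)
def Umat : Matrix (Fin (n+1)) (Fin (n+1)) ℤ :=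
  Matrix.of fun k j => if (k:ℕ) ≤ (j:ℕ) then (Nat.choose m ((j:ℕ) - k) : ℤ) else 0

lemma LU_eq : Lmat n * Umat m n = Amat m n := by
  ext i j
  rw [Matrix.mul_apply]
  have h1 : ∑ k : Fin (n+1), Lmat n i k * Umat m n k j
      = ∑ k ∈ Finset.range (n+1),
          ((Nat.choose i k : ℤ) * (if k ≤ (j:ℕ) then (Nat.choose m ((j:ℕ) - k) : ℤ) else 0)) := by
    rw [← Fin.sum_univ_eq_sum_range]
    rfl
  rw [h1, ← Finset.sum_subset (Finset.range_subset_range.mpr (by omega : (j:ℕ)+1 ≤ n+1))]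
  · have h2 : ∀ k ∈ Finset.range ((j:ℕ)+1),
        ((Nat.choose i k : ℤ) * (if k ≤ (j:ℕ) then (Nat.choose m ((j:ℕ) - k) : ℤ) else 0))
          = ((Nat.choose i k * Nat.choose m ((j:ℕ) - k) : ℕ) : ℤ) := by
      intro k hk
      rw [if_pos (by simpa using Nat.lt_succ_iff.mp (Finset.mem_range.mp hk))]
      push_cast; ring
    rw [Finset.sum_congr rfl h2, ← Nat.cast_sum]
    have h3 : ∑ k ∈ Finset.range ((j:ℕ)+1), Nat.choose i k * Nat.choose m ((j:ℕ) - k)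
        = Nat.choose ((i:ℕ) + m) (j:ℕ) := by
      rw [Nat.add_choose_eq]
      rw [Finset.Nat.sum_antidiagonal_eq_sum_range_succ_mk]
    rw [h3]
    simp [Amat, Nat.add_comm]
  · intro k hk1 hk2
    rw [if_neg (by simp only [Finset.mem_range] at *; omega)]
    ring

lemma det_A : (Amat m n).det = 1 := by
  rw [← LU_eq, Matrix.det_mul]
  have hL : (Lmat n).det = 1 := by
    have ht : (Lmat n).BlockTriangular OrderDual.toDual := by
      intro i j h
      have hij : i < j := h
      have : (i:ℕ) < (j:ℕ) := hij
      simp [Lmat, Nat.choose_eq_zero_of_lt this]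
    rw [Matrix.det_of_lowerTriangular _ ht]
    simp [Lmat]
  have hU : (Umat m n).det = 1 := by
    have ht : (Umat m n).BlockTriangular id := by
      intro i j h
      have : (j:ℕ) < (i:ℕ) := h
      exact if_neg (Nat.not_le.mpr this)
    rw [Matrix.det_of_upperTriangular ht]
    simp [Umat]
  rw [hL, hU, one_mul]

lemma inv_00 : (Amat m n)⁻¹ 0 0 = (Nat.choose (m + n) n : ℤ) := by
  have hA : IsUnit (Amat m n).det := by rw [det_A]; exact isUnit_one
  set z : Fin (n+1) → ℤ := fun j => (-1:ℤ)^(j:ℕ) * (Nat.choose (m + n - j) (n - j) : ℤ) with hzdef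
  have hz : (Amat m n) *ᵥ z = Pi.single 0 1 := by
    ext i
    rw [Matrix.mulVec, dotProduct]
    have h1 : ∑ j : Fin (n+1), Amat m n i j * z j
        = ∑ j ∈ Finset.range (n+1),
            ((-1:ℤ)^j * (Nat.choose (m + (i:ℕ)) j : ℤ) * (Nat.choose (m + n - j) m : ℤ)) := by
      rw [← Fin.sum_univ_eq_sum_range]
      refine Finset.sum_congr rfl fun j _ => ?_
      have hsym : Nat.choose (m + n - (j:ℕ)) (n - (j:ℕ)) = Nat.choose (m + n - (j:ℕ)) m := by
        have hj : (j:ℕ) ≤ n := by omega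
        have := Nat.choose_symm (n := m + n - (j:ℕ)) (k := m) (by omega)
        rw [(by omega : m + n - (j:ℕ) - m = n - (j:ℕ))] at this
        exact this
      simp only [Amat, Matrix.of_apply, hzdef, hsym]
      ring
    rw [h1, key m (m + (i:ℕ)) n (by omega)]
    rcases eq_or_ne i 0 with hi | hi
    · subst hi
      simp
    · have hi1 : 1 ≤ (i:ℕ) := by
        rcases Nat.eq_zero_or_pos (i:ℕ) with h | h
        · exact absurd (Fin.ext (by simp [h])) hi
        · exact h
      rw [Pi.single_apply, if_neg hi]
      have : m + n - (m + (i:ℕ)) < n := by omega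
      simp [Nat.choose_eq_zero_of_lt this]
  have h2 : (Amat m n)⁻¹ *ᵥ ((Amat m n) *ᵥ z) = z := by
    rw [Matrix.mulVec_mulVec, Matrix.nonsing_inv_mul _ hA, Matrix.one_mulVec]
  rw [hz] at h2
  have h3 := congrFun h2 0
  rw [Matrix.mulVec_single] at h3
  simpa [hzdef] using h3

lemma minor_det : (Matrix.det ((Amat m n).submatrix Fin.succ Fin.succ)) = (Nat.choose (m + n) n : ℤ) := by
  have hadj : (Amat m n).adjugate 0 0 = (Nat.choose (m + n) n : ℤ) := by
    have : (Amat m n)⁻¹ = (Amat m n).adjugate := by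
      rw [Matrix.inv_def, det_A, Ring.inverse_one, one_smul]
    rw [← this, inv_00]
  rw [← hadj, Matrix.adjugate_def]
  have h1 : ((Matrix.of fun i => Matrix.cramer (Amat m n)ᵀ (Pi.single i 1)) 0 0 : ℤ)
      = ((Amat m n)ᵀ.updateCol 0 (Pi.single 0 1)).det := by
    simp [Matrix.cramer_apply]
  rw [h1, Matrix.updateCol_transpose, Matrix.det_transpose]
  set B := (Amat m n).updateRow 0 (Pi.single 0 1) with hB
  rw [Matrix.det_succ_row_zero]
  rw [Finset.sum_eq_single 0]
  · have hB0 : B 0 0 = 1 := by simp [hB]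
    have hsub : B.submatrix Fin.succ (Fin.succAbove 0) = (Amat m n).submatrix Fin.succ Fin.succ := by
      ext i j
      simp [hB, Matrix.updateRow_ne (Fin.succ_ne_zero i), Fin.succAbove_zero]
    rw [hB0, hsub]
    simp
  · intro b _ hb
    have : B 0 b = 0 := by simp [hB, Pi.single_apply, hb]
    rw [this]; ring
  · simp

end

theorem stmt3 (ℓ : ℕ) (hℓ : 1 ≤ ℓ) :
    Matrix.det (fun i j : Fin ℓ => (Nat.choose (ℓ + (i : ℕ) + 1) ((j : ℕ) + 1) : ℤ)) =
      (Nat.choose (2 * ℓ) ℓ : ℤ) ∧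
    Matrix.det (fun i j : Fin ℓ => (Nat.choose (ℓ + (i : ℕ) + 1) ((j : ℕ) + 1) : ℤ)) ≠ 0 := by
  have hmat : (fun i j : Fin ℓ => (Nat.choose (ℓ + (i : ℕ) + 1) ((j : ℕ) + 1) : ℤ))
      = (Amat ℓ ℓ).submatrix Fin.succ Fin.succ := by
    ext i j
    simp [Amat, Matrix.submatrix_apply, Fin.val_succ, Nat.add_assoc]
  have hdet : Matrix.det (fun i j : Fin ℓ => (Nat.choose (ℓ + (i : ℕ) + 1) ((j : ℕ) + 1) : ℤ))
      = (Nat.choose (2 * ℓ) ℓ : ℤ) := by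
    rw [hmat, minor_det, two_mul]
  refine ⟨hdet, ?_⟩
  rw [hdet]
  exact_mod_cast (Nat.choose_pos (by omega : ℓ ≤ 2 * ℓ)).ne'
end

section
/- Let ℓ ≥ 1 and define α_j = 2(-1)^{j-ℓ-1} · binom(2ℓ-1, ℓ-1) · binom(ℓ, j-ℓ-1) · (2ℓ-j+1)/((j-1)j) for ℓ+1 ≤ j ≤ 2ℓ. Then Σ_{j=ℓ+1}^{2ℓ} α_j = 1. -/
lemma key_sum (n : ℕ) : ∀ x : ℕ, 1 ≤ x →
    ∑ k ∈ Finset.range (n+1), (-1:ℝ)^k * (n.choose k) / (x + k)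
      = (n.factorial : ℝ) * ((x-1).factorial : ℝ) / ((x+n).factorial : ℝ) := by
  induction n with
  | zero =>
    intro x hx
    obtain ⟨y, rfl⟩ := Nat.exists_eq_add_of_le hx
    have h0 : (0:ℝ) < (1 + y : ℕ) := by positivity
    simp [Nat.factorial_succ, Nat.add_sub_cancel_left]
    rw [Nat.add_comm 1 y]
    rw [Nat.factorial_succ]
    push_cast
    field_simp
    ring
  | succ n ih =>
    intro x hx
    have hx0 : (0:ℝ) < (x:ℝ) := by exact_mod_cast hx.trans_lt' (by norm_num)
    have split : ∑ k ∈ Finset.range (n+2), (-1:ℝ)^k * ((n+1).choose k) / (x + k)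
        = (∑ k ∈ Finset.range (n+1), (-1:ℝ)^k * (n.choose k) / (x + k))
          - ∑ k ∈ Finset.range (n+1), (-1:ℝ)^k * (n.choose k) / ((x+1:ℕ) + k) := by
      have hB : (∑ k ∈ Finset.range (n+1), (-1:ℝ)^k * (n.choose k) / (x + k))
          = ∑ k ∈ Finset.range (n+2), (-1:ℝ)^k * (n.choose k) / (x + k) := by
        rw [Finset.sum_range_succ (fun k => (-1:ℝ)^k * (n.choose k) / (x + k)) (n+1)]
        simp
      rw [hB,
        Finset.sum_range_succ' (fun k => (-1:ℝ)^k * ((n+1).choose k) / (x + k)) (n+1),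
        Finset.sum_range_succ' (fun k => (-1:ℝ)^k * (n.choose k) / (x + k)) (n+1)]
      have hterm : ∀ i ∈ Finset.range (n+1),
          (-1:ℝ)^(i+1) * (((n+1).choose (i+1) : ℕ) : ℝ) / (x + (i+1 : ℕ))
          = ((-1:ℝ)^(i+1) * ((n.choose (i+1) : ℕ) : ℝ) / (x + (i+1 : ℕ)))
            - (-1:ℝ)^i * ((n.choose i : ℕ) : ℝ) / ((x+1:ℕ) + i) := by
        intro i _
        have hc : (((n+1).choose (i+1) : ℕ) : ℝ) = (n.choose i : ℝ) + (n.choose (i+1) : ℝ) := by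
          exact_mod_cast congrArg (Nat.cast : ℕ → ℝ) (Nat.choose_succ_succ n i)
        rw [hc]
        have hd : (0:ℝ) < (x:ℝ) + ((i+1 : ℕ) : ℝ) := by positivity
        push_cast
        field_simp
        ring
      rw [Finset.sum_congr rfl hterm, Finset.sum_sub_distrib]
      simp
      ring
    have hf2 : (x.factorial : ℝ) = (x:ℝ) * ((x-1).factorial : ℝ) := by
      obtain ⟨y, rfl⟩ := Nat.exists_eq_add_of_le hx
      rw [Nat.add_comm 1 y, Nat.add_sub_cancel, Nat.factorial_succ]
      push_cast; ring
    have hf1 : ((x+n+1).factorial : ℝ) = ((x:ℝ) + n + 1) * ((x+n).factorial : ℝ) := by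
      rw [Nat.factorial_succ]; push_cast; ring
    have hf3 : (((n+1).factorial : ℕ) : ℝ) = ((n:ℝ) + 1) * (n.factorial : ℝ) := by
      rw [Nat.factorial_succ]; push_cast; ring
    have hne1 : ((x+n).factorial : ℝ) ≠ 0 := by positivity
    have hne2 : ((x:ℝ) + n + 1) ≠ 0 := by positivity
    have e1 : x + 1 - 1 = x := by omega
    have e2 : x + 1 + n = x + n + 1 := by omega
    have e2b : x + (n + 1) = x + n + 1 := by omega
    rw [split, ih x hx, ih (x+1) (by omega), e1, e2, e2b, hf1, hf2, hf3]
    generalize hF : ((x+n).factorial : ℝ) = F at hne1 ⊢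
    field_simp
    ring

theorem stmt5 (ℓ : ℕ) (hℓ : 1 ≤ ℓ) (α : ℕ → ℝ)
    (hα : ∀ j, α j = 2 * (-1 : ℝ) ^ (j - ℓ - 1) * (Nat.choose (2 * ℓ - 1) (ℓ - 1) : ℝ) *
      (Nat.choose ℓ (j - ℓ - 1) : ℝ) * (2 * ℓ - j + 1) / ((j - 1) * j)) :
    ∑ j ∈ Finset.Icc (ℓ + 1) (2 * ℓ), α j = 1 := by
  set C : ℝ := (Nat.choose (2 * ℓ - 1) (ℓ - 1) : ℝ) with hCdef
  have hIcc : Finset.Icc (ℓ + 1) (2 * ℓ) = Finset.Ico (ℓ+1) (2*ℓ+1) :=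
    (Finset.Ico_add_one_right_eq_Icc ..).symm
  rw [hIcc, Finset.sum_Ico_eq_sum_range]
  have hrange : 2*ℓ+1 - (ℓ+1) = ℓ := by omega
  rw [hrange]
  have hL : (0:ℝ) < (ℓ:ℝ) := by exact_mod_cast hℓ.trans_lt' (by norm_num)
  have hsum : ∑ i ∈ Finset.range ℓ, α (ℓ+1+i)
      = 2*C*(2*(ℓ:ℝ)) * (∑ k ∈ Finset.range (ℓ+1), (-1:ℝ)^k * (ℓ.choose k)/(ℓ + k))
        - 2*C*(2*(ℓ:ℝ)+1) * (∑ k ∈ Finset.range (ℓ+1), (-1:ℝ)^k * (ℓ.choose k)/((ℓ+1:ℕ) + k)) := by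
    rw [Finset.mul_sum, Finset.mul_sum, ← Finset.sum_sub_distrib,
        Finset.sum_range_succ]
    have hlast : 2*C*(2*(ℓ:ℝ)) * ((-1:ℝ)^ℓ * (ℓ.choose ℓ)/(ℓ + ℓ))
        - 2*C*(2*(ℓ:ℝ)+1) * ((-1:ℝ)^ℓ * (ℓ.choose ℓ)/((ℓ+1:ℕ) + ℓ)) = 0 := by
      push_cast
      have h1 : (ℓ:ℝ) + ℓ ≠ 0 := by positivity
      have h2 : (ℓ:ℝ) + 1 + ℓ ≠ 0 := by positivity
      field_simp
      ring
    rw [hlast, add_zero]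
    apply Finset.sum_congr rfl
    intro i _
    rw [hα]
    have e1 : ℓ+1+i-ℓ-1 = i := by omega
    rw [e1]
    have hi : (0:ℝ) ≤ (i:ℝ) := Nat.cast_nonneg i
    have h1 : (ℓ:ℝ) + i ≠ 0 := by positivity
    have h2 : (ℓ:ℝ) + 1 + i ≠ 0 := by positivity
    push_cast
    rw [show ((ℓ:ℝ)+1+(i:ℝ)-1) = (ℓ:ℝ)+(i:ℝ) from by ring]
    field_simp
    ring
  rw [hsum, key_sum ℓ ℓ hℓ, key_sum ℓ (ℓ+1) (by omega)]
  have e3 : ℓ + 1 - 1 = ℓ := by omega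
  rw [e3]
  have hf3 : (ℓ.factorial : ℝ) = (ℓ:ℝ) * ((ℓ-1).factorial : ℝ) := by
    obtain ⟨y, rfl⟩ := Nat.exists_eq_add_of_le hℓ
    rw [Nat.add_comm 1 y, Nat.add_sub_cancel, Nat.factorial_succ]
    push_cast; ring
  have e2 : ((2*ℓ-1 : ℕ) : ℝ) + 1 = 2*(ℓ:ℝ) := by
    have : (2*ℓ-1) + 1 = 2*ℓ := by omega
    exact_mod_cast congrArg (Nat.cast : ℕ → ℝ) this
  have hf1 : ((ℓ+ℓ).factorial : ℝ) = 2*(ℓ:ℝ) * ((2*ℓ-1).factorial : ℝ) := by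
    have e : ℓ + ℓ = (2*ℓ-1) + 1 := by omega
    rw [e, Nat.factorial_succ]
    push_cast
    rw [e2]
  have hf2 : ((ℓ+1+ℓ).factorial : ℝ) = (2*(ℓ:ℝ)+1) * (2*(ℓ:ℝ)) * ((2*ℓ-1).factorial : ℝ) := by
    have e : ℓ + 1 + ℓ = ((2*ℓ-1) + 1) + 1 := by omega
    rw [e, Nat.factorial_succ, Nat.factorial_succ]
    push_cast
    rw [e2]
    ring
  have hC : C * (((ℓ-1).factorial : ℝ) * ((ℓ:ℝ) * ((ℓ-1).factorial : ℝ)))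
      = ((2*ℓ-1).factorial : ℝ) := by
    rw [← hf3, hCdef]
    have h := Nat.choose_mul_factorial_mul_factorial (show ℓ-1 ≤ 2*ℓ-1 by omega)
    rw [show 2*ℓ-1-(ℓ-1) = ℓ from by omega] at h
    push_cast [← h]
    ring
  have hCne : C ≠ 0 := by
    rw [hCdef]
    exact_mod_cast (Nat.choose_pos (show ℓ-1 ≤ 2*ℓ-1 by omega)).ne'
  have hA : ((ℓ-1).factorial : ℝ) ≠ 0 := by positivity
  have hLne : (ℓ:ℝ) ≠ 0 := hL.ne'
  have h2L1 : 2*(ℓ:ℝ)+1 ≠ 0 := by positivity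
  rw [hf1, hf2, hf3, ← hC]
  field_simp
  ring
end

section
/- Let ℓ ≥ 1 and define α_j = 2(-1)^{j-ℓ-1} · binom(2ℓ-1, ℓ-1) · binom(ℓ, j-ℓ-1) · (2ℓ-j+1)/((j-1)j) for ℓ+1 ≤ j ≤ 2ℓ. Then Σ_{j=ℓ+1}^{2ℓ} j·α_j = 2. -/
lemma key_s6 (n : ℕ) : ∀ x : ℝ, 0 < x →
    ∑ k ∈ Finset.range (n+1), (-1:ℝ)^k * (n.choose k) / (x + k)
      = (n.factorial : ℝ) / ∏ k ∈ Finset.range (n+1), (x + k) := by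
  induction n with
  | zero => intro x hx; simp
  | succ n ih =>
    intro x hx
    have hprodpos : ∀ y : ℝ, 0 < y → 0 < ∏ k ∈ Finset.range (n+1), (y + k) := by
      intro y hy
      exact Finset.prod_pos (fun k _ => by positivity)
    have hP := hprodpos x hx
    have hP1 := hprodpos (x+1) (by linarith)
    -- rewrite sum using Pascal
    have h1 : ∑ k ∈ Finset.range (n+2), (-1:ℝ)^k * ((n+1).choose k) / (x + k)
        = (∑ k ∈ Finset.range (n+1), (-1:ℝ)^k * (n.choose k) / (x + k))
          - ∑ k ∈ Finset.range (n+1), (-1:ℝ)^k * (n.choose k) / ((x+1) + k) := by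
      rw [Finset.sum_range_succ' (fun k => (-1:ℝ)^k * ((n+1).choose k) / (x + k))]
      have h2 : ∀ k, ((n+1).choose (k+1) : ℝ) = (n.choose k : ℝ) + (n.choose (k+1) : ℝ) := by
        intro k; rw [Nat.choose_succ_succ]; push_cast; ring
      have h3 : ∑ k ∈ Finset.range (n+1), (-1:ℝ)^(k+1) * ((n+1).choose (k+1)) / (x + (k+1))
          = (∑ k ∈ Finset.range (n+1), (-1:ℝ)^(k+1) * (n.choose k) / (x + (k+1)))
            + ∑ k ∈ Finset.range (n+1), (-1:ℝ)^(k+1) * (n.choose (k+1)) / (x + (k+1)) := by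
        rw [← Finset.sum_add_distrib]
        refine Finset.sum_congr rfl fun k _ => ?_
        rw [h2]; ring
      push_cast
      rw [h3]
      have h4 : ∑ k ∈ Finset.range (n+1), (-1:ℝ)^(k+1) * (n.choose k) / (x + (k+1))
          = - ∑ k ∈ Finset.range (n+1), (-1:ℝ)^k * (n.choose k) / ((x+1) + k) := by
        rw [← Finset.sum_neg_distrib]
        refine Finset.sum_congr rfl fun k _ => ?_
        ring_nf
      have h5 : ∑ k ∈ Finset.range (n+1), (-1:ℝ)^(k+1) * (n.choose (k+1)) / (x + (k+1))
          = (∑ k ∈ Finset.range (n+2), (-1:ℝ)^k * (n.choose k) / (x + k)) - 1/x := by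
        rw [Finset.sum_range_succ' (fun k => (-1:ℝ)^k * (n.choose k) / (x + k))]
        push_cast
        simp
      have h6 : ∑ k ∈ Finset.range (n+2), (-1:ℝ)^k * (n.choose k) / (x + k)
          = ∑ k ∈ Finset.range (n+1), (-1:ℝ)^k * (n.choose k) / (x + k) := by
        rw [Finset.sum_range_succ]
        simp [Nat.choose_succ_self]
      rw [h4, h5, h6]
      simp [Nat.choose_zero_right]
      ring
    rw [h1, ih x hx, ih (x+1) (by linarith)]
    -- product relations
    have hQ : ∏ k ∈ Finset.range (n+2), (x + k) = (∏ k ∈ Finset.range (n+1), (x + k)) * (x + (n+1)) := by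
      rw [Finset.prod_range_succ]; push_cast; ring
    have hQ' : ∏ k ∈ Finset.range (n+2), (x + k) = x * ∏ k ∈ Finset.range (n+1), ((x+1) + k) := by
      rw [Finset.prod_range_succ' (fun k => x + (k:ℝ))]
      rw [mul_comm]
      push_cast
      rw [add_zero]
      congr 1
      refine Finset.prod_congr rfl fun k _ => ?_
      ring
    have hfac : ((n+1).factorial : ℝ) = (n+1) * n.factorial := by
      rw [Nat.factorial_succ]; push_cast; ring
    rw [hQ]
    have hx' : x ≠ 0 := ne_of_gt hx
    have hPne : (∏ k ∈ Finset.range (n+1), (x + k)) ≠ 0 := ne_of_gt hP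
    have hP1ne : (∏ k ∈ Finset.range (n+1), ((x+1) + k)) ≠ 0 := ne_of_gt hP1
    have hxn : x + ((n:ℝ)+1) ≠ 0 := by positivity
    have hrel : (∏ k ∈ Finset.range (n+1), (x + k)) * (x + ((n:ℝ)+1)) = x * ∏ k ∈ Finset.range (n+1), ((x+1) + k) := by
      rw [← hQ]; rw [hQ']
    rw [hfac, div_sub_div _ _ hPne hP1ne,
      div_eq_div_iff (mul_ne_zero hPne hP1ne) (mul_ne_zero hPne hxn)]
    linear_combination (-(n.factorial:ℝ) * (∏ k ∈ Finset.range (n+1), (x + k))) * hrel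

theorem stmt6 (ℓ : ℕ) (hℓ : 1 ≤ ℓ) (α : ℕ → ℝ)
    (hα : ∀ j, α j = 2 * (-1 : ℝ) ^ (j - ℓ - 1) * (Nat.choose (2 * ℓ - 1) (ℓ - 1) : ℝ) *
      (Nat.choose ℓ (j - ℓ - 1) : ℝ) * (2 * ℓ - j + 1) / ((j - 1) * j)) :
    ∑ j ∈ Finset.Icc (ℓ + 1) (2 * ℓ), (j : ℝ) * α j = 2 := by
  obtain ⟨m, rfl⟩ : ∃ m, ℓ = m + 1 := ⟨ℓ - 1, by omega⟩
  rw [← Finset.Ico_add_one_right_eq_Icc, Finset.sum_Ico_eq_sum_range]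
  have hcard : 2 * (m+1) + 1 - (m+1+1) = m + 1 := by omega
  rw [hcard]
  have hterm : ∀ k ∈ Finset.range (m+1),
      ((m+1+1+k : ℕ) : ℝ) * α (m+1+1+k)
        = (2 * ((2*m+1).choose m : ℝ) * ((m:ℝ)+1)) *
          ((-1:ℝ)^k * ((m.choose k) : ℝ) / (((m:ℝ)+1) + k)) := by
    intro k hk
    have hk' : k ≤ m := Nat.lt_succ_iff.mp (Finset.mem_range.mp hk)
    rw [hα]
    have e1 : m+1+1+k - (m+1) - 1 = k := by omega
    have e2 : 2*(m+1)-1 = 2*m+1 := by omega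
    have e3 : (m+1)-1 = m := by omega
    rw [e1, e2, e3]
    have hcast : ((m+1-k : ℕ) : ℝ) = (m:ℝ)+1-(k:ℝ) := by
      rw [Nat.cast_sub (by omega : k ≤ m+1)]; push_cast; ring
    have hchoose : ((m+1).choose k : ℝ) * ((m:ℝ)+1-(k:ℝ)) = ((m:ℝ)+1) * ((m.choose k) : ℝ) := by
      have h := Nat.choose_mul_succ_eq m k
      have h' : ((m.choose k : ℝ)) * ((m:ℝ)+1) = ((m+1).choose k : ℝ) * ((m+1-k : ℕ) : ℝ) := by
        exact_mod_cast h
      rw [hcast] at h'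
      linarith [h']
    have hm0 : (0:ℝ) ≤ (m:ℝ) := Nat.cast_nonneg m
    have hk0 : (0:ℝ) ≤ (k:ℝ) := Nat.cast_nonneg k
    have hJ : ((m:ℝ)+1+1+(k:ℝ)) ≠ 0 := by positivity
    have hJm1 : ((m:ℝ)+1+1+(k:ℝ)) - 1 ≠ 0 := by intro h; linarith
    have hJ1 : ((m:ℝ)+1+(k:ℝ)) ≠ 0 := by positivity
    push_cast
    field_simp
    linear_combination ((((2*m+1).choose m : ℕ) : ℝ) * ((m:ℝ)+1+(k:ℝ))) * hchoose
  rw [Finset.sum_congr rfl hterm, ← Finset.mul_sum]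
  have hx : (0:ℝ) < (m:ℝ)+1 := by positivity
  rw [key_s6 m ((m:ℝ)+1) hx]
  -- product identity in ℕ
  have hprodN : (m.factorial) * ∏ k ∈ Finset.range (m+1), (m+1+k) = (2*m+1).factorial := by
    have h1 : ∏ k ∈ Finset.range (m+1), (m+1+k) = ∏ i ∈ Finset.Ico (m+1) (2*m+2), i := by
      rw [Finset.prod_Ico_eq_prod_range]
      have : 2*m+2-(m+1) = m+1 := by omega
      rw [this]
    rw [h1, ← Finset.prod_Ico_id_eq_factorial m, ← Finset.prod_Ico_id_eq_factorial (2*m+1)]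
    have : 2*m+1+1 = 2*m+2 := by ring
    rw [this]
    exact Finset.prod_Ico_consecutive _ (by omega) (by omega)

  have hprodR : (m.factorial : ℝ) * ∏ k ∈ Finset.range (m+1), (((m:ℝ)+1) + k) = ((2*m+1).factorial : ℝ) := by
    have hcast : (∏ k ∈ Finset.range (m+1), (((m:ℝ)+1) + k)) = ((∏ k ∈ Finset.range (m+1), (m+1+k) : ℕ) : ℝ) := by
      push_cast
      exact Finset.prod_congr rfl fun k _ => by norm_num
    rw [hcast, ← Nat.cast_mul, hprodN]
  have hCF : ((2*m+1).choose m) * m.factorial * (m+1).factorial = (2*m+1).factorial := by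
    have h := Nat.choose_mul_factorial_mul_factorial (by omega : m ≤ 2*m+1)
    have : 2*m+1-m = m+1 := by omega
    rw [this] at h
    exact h
  have hPpos : (0:ℝ) < ∏ k ∈ Finset.range (m+1), (((m:ℝ)+1) + k) :=
    Finset.prod_pos (fun k _ => by positivity)
  have hfacpos : (0:ℝ) < (m.factorial : ℝ) := by positivity
  have hCFR : (((2*m+1).choose m : ℕ) : ℝ) * m.factorial * (m+1).factorial = ((2*m+1).factorial : ℝ) := by
    exact_mod_cast hCF
  have hfs : ((m+1).factorial : ℝ) = ((m:ℝ)+1) * m.factorial := by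
    rw [Nat.factorial_succ]; push_cast; ring
  rw [← mul_div_assoc, div_eq_iff (ne_of_gt hPpos)]
  have hmain : (2 * (((2*m+1).choose m : ℕ) : ℝ) * ((m:ℝ)+1) * (m.factorial : ℝ)) * (m.factorial : ℝ)
      = (2 * ∏ k ∈ Finset.range (m+1), (((m:ℝ)+1) + k)) * (m.factorial : ℝ) := by
    linear_combination (2:ℝ) * hCFR - 2 * hprodR - (2 * (((2*m+1).choose m : ℕ) : ℝ) * (m.factorial : ℝ)) * hfs
  exact mul_right_cancel₀ (ne_of_gt hfacpos) hmain
end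

section
/- Let ℓ ≥ 2 and 2 ≤ d ≤ ℓ, and define α_j = 2(-1)^{j-ℓ-1} · binom(2ℓ-1, ℓ-1) · binom(ℓ, j-ℓ-1) · (2ℓ-j+1)/((j-1)j) for ℓ+1 ≤ j ≤ 2ℓ. Then Σ_{j=ℓ+1}^{2ℓ} binom(j, d) · α_j = 0. -/
open Finset fwdDiff

/-- iterated forward difference of the zero function is zero -/
lemma fwdDiff_iter_zero_fun (k : ℕ) :
    (fwdDiff (1:ℕ))^[k] (fun _ : ℕ => (0 : ℤ)) = fun _ => 0 := by
  induction k with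
  | zero => rfl
  | succ k ih => rw [Function.iterate_succ_apply', ih]; ext x; simp [fwdDiff]

/-- the n-th forward difference of x ↦ choose x m is zero if m < n -/
lemma fwdDiff_iter_choose_eq_zero {m n : ℕ} (h : m < n) :
    (fwdDiff (1:ℕ))^[n] (fun x : ℕ => ((x.choose m : ℤ))) = fun _ => 0 := by
  obtain ⟨j, rfl⟩ := Nat.exists_eq_add_of_lt h
  have e1 : (fwdDiff (1:ℕ))^[m] (fun x : ℕ => ((x.choose m : ℤ))) = fun _ => 1 := by
    simpa using fwdDiff_iter_choose 0 m
  have e2 : (fwdDiff (1:ℕ))^[m+1] (fun x : ℕ => ((x.choose m : ℤ))) = fun _ => 0 := by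
    rw [Function.iterate_succ_apply', e1]; ext x; simp [fwdDiff]
  have heq : m + j + 1 = j + (m + 1) := by omega
  rw [heq, Function.iterate_add_apply, e2, fwdDiff_iter_zero_fun]

lemma keyzero (n m a : ℕ) (h : m < n) :
    ∑ i ∈ Finset.range (n + 1), (-1 : ℤ) ^ i * n.choose i * (a + i).choose m = 0 := by
  have h0 := fwdDiff_iter_eq_sum_shift (1 : ℕ) (fun x : ℕ => ((x.choose m : ℤ))) n a
  rw [fwdDiff_iter_choose_eq_zero h] at h0
  have h1 : ∑ k ∈ Finset.range (n + 1),
      (-1 : ℤ) ^ (n - k) * n.choose k * (a + k).choose m = 0 := by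
    simpa [smul_eq_mul, mul_assoc] using h0.symm
  have h2 : ∀ k ∈ Finset.range (n + 1),
      (-1 : ℤ) ^ k * n.choose k * (a + k).choose m
        = (-1 : ℤ) ^ n * ((-1) ^ (n - k) * n.choose k * (a + k).choose m) := by
    intro k hk
    rw [Finset.mem_range] at hk
    have hk' : k ≤ n := by omega
    have e : (-1 : ℤ) ^ (n - k) * (-1) ^ k = (-1) ^ n := by
      rw [← pow_add, Nat.sub_add_cancel hk']
    have hs : (-1 : ℤ) ^ (n - k) * (-1) ^ (n - k) = 1 := by
      rw [← pow_add, ← two_mul, pow_mul]; norm_num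
    have e2 : (-1 : ℤ) ^ k = (-1) ^ n * (-1) ^ (n - k) := by
      calc (-1 : ℤ) ^ k = ((-1) ^ (n - k) * (-1) ^ (n - k)) * (-1) ^ k := by rw [hs]; ring
        _ = (-1) ^ (n - k) * ((-1) ^ (n - k) * (-1) ^ k) := by ring
        _ = (-1) ^ (n - k) * (-1) ^ n := by rw [e]
        _ = (-1) ^ n * (-1) ^ (n - k) := by ring
    rw [e2]; ring
  rw [Finset.sum_congr rfl h2, ← Finset.mul_sum, h1, mul_zero]

theorem stmt7 (ℓ : ℕ) (hℓ : 2 ≤ ℓ) (d : ℕ) (hd1 : 2 ≤ d) (hd2 : d ≤ ℓ) (α : ℕ → ℝ)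
    (hα : ∀ j, α j = 2 * (-1 : ℝ) ^ (j - ℓ - 1) * (Nat.choose (2 * ℓ - 1) (ℓ - 1) : ℝ) *
      (Nat.choose ℓ (j - ℓ - 1) : ℝ) * (2 * ℓ - j + 1) / ((j - 1) * j)) :
    ∑ j ∈ Finset.Icc (ℓ + 1) (2 * ℓ), (Nat.choose j d : ℝ) * α j = 0 := by
  set C1 : ℝ := (Nat.choose (2 * ℓ - 1) (ℓ - 1) : ℝ) with hC1
  -- the key vanishing alternating sum, over ℤ then ℝ
  have key : ∑ i ∈ Finset.range ((ℓ - 1) + 1),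
      (-1 : ℤ) ^ i * (ℓ - 1).choose i * ((ℓ - 1) + i).choose (d - 2) = 0 :=
    keyzero (ℓ - 1) (d - 2) (ℓ - 1) (by omega)
  have hrange : (ℓ - 1) + 1 = ℓ := by omega
  rw [hrange] at key
  have keyR : ∑ i ∈ Finset.range ℓ,
      (-1 : ℝ) ^ i * ((ℓ - 1).choose i : ℝ) * (((ℓ - 1) + i).choose (d - 2) : ℝ) = 0 := by
    have := congrArg (Int.cast : ℤ → ℝ) key
    push_cast at this
    convert this using 2
  rw [← Finset.Ico_add_one_right_eq_Icc, Finset.sum_Ico_eq_sum_range]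
  have h2 : 2 * ℓ + 1 - (ℓ + 1) = ℓ := by omega
  rw [h2]
  have hterm : ∀ i ∈ Finset.range ℓ,
      (Nat.choose (ℓ + 1 + i) d : ℝ) * α (ℓ + 1 + i)
        = (2 * C1 * ℓ / (d * (d - 1))) *
          ((-1 : ℝ) ^ i * ((ℓ - 1).choose i : ℝ) * (((ℓ - 1) + i).choose (d - 2) : ℝ)) := by
    intro i hi
    rw [Finset.mem_range] at hi
    rw [hα]
    have hidx : ℓ + 1 + i - ℓ - 1 = i := by omega
    rw [hidx]
    -- nat identities
    have hA : d * (d - 1) * (ℓ + 1 + i).choose d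
        = (ℓ + i) * (ℓ + 1 + i) * (ℓ - 1 + i).choose (d - 2) := by
      obtain ⟨e, rfl⟩ : ∃ e, d = e + 2 := ⟨d - 2, by omega⟩
      obtain ⟨n, hn⟩ : ∃ n, ℓ = n + 1 := ⟨ℓ - 1, by omega⟩
      subst hn
      have t1 : (n + i + 1) * (n + i).choose e = (n + i + 1).choose (e + 1) * (e + 1) :=
        Nat.add_one_mul_choose_eq (n + i) e
      have t2 : (n + i + 2) * (n + i + 1).choose (e + 1)
          = (n + i + 2).choose (e + 2) * (e + 2) :=
        Nat.add_one_mul_choose_eq (n + i + 1) (e + 1)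
      rw [show n + 1 + 1 + i = n + i + 2 from by omega,
        show n + 1 + i = n + i + 1 from by omega,
        show n + 1 - 1 + i = n + i from by omega,
        show e + 2 - 2 = e from rfl, show e + 2 - 1 = e + 1 from rfl]
      calc (e + 2) * (e + 1) * ((n + i + 2).choose (e + 2))
          = (e + 1) * ((n + i + 2).choose (e + 2) * (e + 2)) := by ring
        _ = (e + 1) * ((n + i + 2) * (n + i + 1).choose (e + 1)) := by rw [← t2]
        _ = (n + i + 2) * ((n + i + 1).choose (e + 1) * (e + 1)) := by ring
        _ = (n + i + 2) * ((n + i + 1) * (n + i).choose e) := by rw [← t1]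
        _ = (n + i + 1) * (n + i + 2) * (n + i).choose e := by ring
    have hB : (ℓ - i) * ℓ.choose i = ℓ * (ℓ - 1).choose i := by
      have := Nat.choose_mul_succ_eq (ℓ - 1) i
      have h' : ℓ - 1 + 1 = ℓ := by omega
      rw [h'] at this
      calc (ℓ - i) * ℓ.choose i = ℓ.choose i * (ℓ - i) := mul_comm _ _
        _ = (ℓ - 1).choose i * ℓ := this.symm
        _ = ℓ * (ℓ - 1).choose i := mul_comm _ _
    -- cast to ℝ
    have hA' : (d : ℝ) * ((d : ℝ) - 1) * ((ℓ + 1 + i).choose d : ℝ)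
        = ((ℓ : ℝ) + i) * ((ℓ : ℝ) + 1 + i) * (((ℓ - 1) + i).choose (d - 2) : ℝ) := by
      have := congrArg (Nat.cast : ℕ → ℝ) hA
      push_cast at this
      have hd : ((d : ℝ) - 1) = ((d - 1 : ℕ) : ℝ) := by
        rw [Nat.cast_sub (by omega)]; norm_num
      rw [hd]
      convert this using 2 <;> push_cast <;> ring
    have hB' : ((ℓ : ℝ) - i) * (ℓ.choose i : ℝ) = (ℓ : ℝ) * ((ℓ - 1).choose i : ℝ) := by
      have := congrArg (Nat.cast : ℕ → ℝ) hB
      push_cast [Nat.cast_sub hi.le] at this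
      exact this
    have hpos1 : ((ℓ : ℝ) + i) ≠ 0 := by positivity
    have hposl : (0:ℝ) < ℓ := by positivity
    have hpos2 : ((ℓ : ℝ) + 1 + i) ≠ 0 := by positivity
    have hpos3 : (d : ℝ) ≠ 0 := by
      have : (0:ℝ) < d := by positivity
      linarith
    have hpos4 : ((d : ℝ) - 1) ≠ 0 := by
      have : (2:ℝ) ≤ d := by exact_mod_cast hd1
      linarith
    push_cast
    have hden : ((ℓ:ℝ) + 1 + i - 1) = (ℓ:ℝ) + i := by ring
    rw [hden]
    field_simp
    linear_combination (C1 * (ℓ.choose i : ℝ) * ((ℓ:ℝ) - i)) * hA'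
      + (C1 * ((ℓ:ℝ) + i) * ((ℓ:ℝ) + 1 + i)
          * (((ℓ - 1 + i).choose (d - 2) : ℝ))) * hB'
  rw [Finset.sum_congr rfl hterm, ← Finset.mul_sum, keyR, mul_zero]
end

section
/- For all real x with |x| < 1/4, Σ_{ℓ=1}^∞ binom(2ℓ, ℓ) · x^ℓ / ℓ = 2·log(2) - 2·log(1 + √(1-4x)). -/
open Real Set

noncomputable def cb (n : ℕ) : ℝ := (Nat.centralBinom n : ℝ)

lemma cb_pos (n : ℕ) : 0 < cb n := by
  unfold cb; exact_mod_cast Nat.centralBinom_pos n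

lemma cb_zero : cb 0 = 1 := by simp [cb, Nat.centralBinom_zero]

lemma cb_one : cb 1 = 2 := by simp [cb, Nat.centralBinom]

lemma nat_cb_le (n : ℕ) : Nat.centralBinom n ≤ 4 ^ n := by
  induction n with
  | zero => simp [Nat.centralBinom_zero]
  | succ n ih =>
    have h := Nat.succ_mul_centralBinom_succ n
    have h2 : (n + 1) * Nat.centralBinom (n + 1) ≤ (n + 1) * (4 * Nat.centralBinom n) := by
      rw [h]; ring_nf; nlinarith [Nat.centralBinom_pos n]
    have := Nat.le_of_mul_le_mul_left h2 (Nat.succ_pos n)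
    calc Nat.centralBinom (n + 1) ≤ 4 * Nat.centralBinom n := this
      _ ≤ 4 * 4 ^ n := by omega
      _ = 4 ^ (n + 1) := by ring

lemma cb_le (n : ℕ) : cb n ≤ 4 ^ n := by
  have := nat_cb_le n
  calc cb n ≤ ((4 ^ n : ℕ) : ℝ) := by unfold cb; exact_mod_cast this
    _ = 4 ^ n := by push_cast; ring

lemma cb_rec (n : ℕ) : ((n : ℝ) + 1) * cb (n + 1) = 2 * (2 * n + 1) * cb n := by
  have := Nat.succ_mul_centralBinom_succ n
  unfold cb; exact_mod_cast this

/-- constancy on a symmetric interval -/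
lemma const_on_Ioo {g : ℝ → ℝ} {r : ℝ} (hr0 : 0 < r)
    (hg : ∀ t ∈ Set.Ioo (-r) r, HasDerivAt g 0 t) {t : ℝ} (ht : t ∈ Set.Ioo (-r) r) :
    g t = g 0 := by
  have h0 : (0:ℝ) ∈ Set.Ioo (-r) r := ⟨by linarith, hr0⟩
  apply (convex_Ioo (-r) r).is_const_of_fderivWithin_eq_zero (𝕜 := ℝ)
  · intro z hz; exact ((hg z hz).differentiableAt).differentiableWithinAt
  · intro z hz
    have h1 : HasFDerivAt g (0 : ℝ →L[ℝ] ℝ) z := by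
      have := (hg z hz).hasFDerivAt
      exact this.congr_fderiv (by ext; simp)
    rw [fderivWithin_of_isOpen isOpen_Ioo hz, h1.fderiv]
  · exact ht
  · exact h0

lemma sum_bound {r : ℝ} (hr0 : 0 < r) {t : ℝ} (ht : |t| ≤ r) (n : ℕ) :
    |cb n * t ^ n| ≤ (4*r)^n := by
  rw [abs_mul, abs_pow, mul_pow]
  have h1 : |cb n| ≤ 4 ^ n := by rw [abs_of_pos (cb_pos n)]; exact cb_le n
  have h2 : |t| ^ n ≤ r ^ n := pow_le_pow_left₀ (abs_nonneg t) ht n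
  exact mul_le_mul h1 h2 (by positivity) (by positivity)

lemma summable_f {r : ℝ} (hr0 : 0 < r) (hr4 : r < 1/4) {t : ℝ} (ht : |t| ≤ r) :
    Summable (fun n => cb n * t ^ n) := by
  apply Summable.of_norm_bounded
    (summable_geometric_of_lt_one (by positivity : (0:ℝ) ≤ 4*r) (by linarith))
  intro n
  rw [Real.norm_eq_abs]; exact sum_bound hr0 ht n

lemma summable_d {r : ℝ} (hr0 : 0 < r) (hr4 : r < 1/4) :
    Summable (fun n : ℕ => (n : ℝ) * (4*r)^n / r) := by
  have h : Summable (fun n : ℕ => (n : ℝ) ^ 1 * (4*r)^n) :=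
    summable_pow_mul_geometric_of_norm_lt_one 1
      (by rw [Real.norm_eq_abs, abs_of_pos (by positivity)]; linarith)
  simpa [pow_one, div_eq_mul_inv, mul_comm, mul_assoc] using h.div_const r

lemma dterm_bound {r : ℝ} (hr0 : 0 < r) {t : ℝ} (ht : |t| ≤ r) (n : ℕ) :
    |cb n * ((n : ℝ) * t ^ (n-1))| ≤ (n : ℝ) * (4*r)^n / r := by
  cases n with
  | zero => simp
  | succ m =>
    have h1 : |cb (m+1)| ≤ 4 ^ (m+1) := by
      rw [abs_of_pos (cb_pos _)]; exact cb_le _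
    have h2 : |t| ^ m ≤ r ^ m := pow_le_pow_left₀ (abs_nonneg t) ht m
    have key : |cb (m+1) * (((m:ℕ)+1 : ℝ) * t ^ m)| ≤ 4^(m+1) * (((m:ℝ)+1) * r^m) := by
      rw [abs_mul, abs_mul, abs_pow]
      have hm : |((m:ℝ)+1)| = (m:ℝ)+1 := abs_of_pos (by positivity)
      rw [hm]
      apply mul_le_mul h1 (by nlinarith [abs_nonneg t, pow_nonneg (abs_nonneg t) m]) (by positivity) (by positivity)
    have : (4:ℝ)^(m+1) * (((m:ℝ)+1) * r^m) = ((m:ℝ)+1) * (4*r)^(m+1) / r := by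
      field_simp; ring
    simp only [Nat.add_sub_cancel] at *
    push_cast
    calc |cb (m+1) * (((m:ℝ)+1) * t ^ m)| ≤ 4^(m+1) * (((m:ℝ)+1) * r^m) := key
      _ = ((m:ℝ)+1) * (4*r)^(m+1) / r := this

lemma gen_fun {r : ℝ} (hr0 : 0 < r) (hr4 : r < 1/4) {t : ℝ} (ht : t ∈ Set.Ioo (-r) r) :
    (∑' n, cb n * t ^ n) * Real.sqrt (1 - 4 * t) = 1 := by
  -- derivative of f on the interval
  have habs : ∀ z : ℝ, z ∈ Set.Ioo (-r) r → |z| ≤ r := by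
    intro z hz; rw [abs_le]; exact ⟨hz.1.le, hz.2.le⟩
  have h0mem : (0:ℝ) ∈ Set.Ioo (-r) r := ⟨by linarith, hr0⟩
  have hDeriv : ∀ y ∈ Set.Ioo (-r) r, HasDerivAt (fun z => ∑' n, cb n * z ^ n)
      (∑' n, cb n * ((n : ℝ) * y ^ (n-1))) y := by
    intro y hy
    exact hasDerivAt_tsum_of_isPreconnected (summable_d hr0 hr4) isOpen_Ioo
      (convex_Ioo (-r) r).isPreconnected
      (fun n z _ => (hasDerivAt_pow n z).const_mul (cb n))
      (fun n z hz => by rw [Real.norm_eq_abs]; exact dterm_bound hr0 (habs z hz) n)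
      h0mem (summable_f hr0 hr4 (by simpa using hr0.le)) hy
  -- the ODE : (1 - 4 t) * D = 2 * f, pointwise on the interval
  have hODE : ∀ t ∈ Set.Ioo (-r) r, (∑' n, cb n * ((n : ℝ) * t ^ (n-1)))
      = 4 * (t * (∑' n, cb n * ((n : ℝ) * t ^ (n-1)))) + 2 * (∑' n, cb n * t ^ n) := by
    intro t ht
    set D := ∑' n, cb n * ((n : ℝ) * t ^ (n-1)) with hDdef
    have hsumd : Summable (fun n => cb n * ((n : ℝ) * t ^ (n-1))) := by
      apply Summable.of_norm_bounded (summable_d hr0 hr4)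
      intro n; rw [Real.norm_eq_abs]; exact dterm_bound hr0 (habs t ht) n
    have hD : HasSum (fun n => cb n * ((n : ℝ) * t ^ (n-1))) D := hsumd.hasSum
    have hfS : HasSum (fun n => cb n * t ^ n) (∑' n, cb n * t ^ n) :=
      (summable_f hr0 hr4 (habs t ht)).hasSum
    have h1 : HasSum (fun n => cb (n+1) * (((n:ℕ)+1 : ℝ) * t ^ n)) D := by
      have := (hasSum_nat_add_iff' 1).2 hD
      simpa using this
    have h2 : HasSum (fun n : ℕ => (n:ℝ) * (cb n * t^n)) (t * D) := by
      have h := hD.mul_left t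
      rw [show (fun n : ℕ => (n:ℝ) * (cb n * t^n)) = (fun i : ℕ => t * (cb i * ((i:ℝ) * t ^ (i-1)))) from ?_]
      · exact h
      funext n
      cases n with
      | zero => simp
      | succ m => simp only [Nat.add_sub_cancel]; push_cast; ring
    have h4 : HasSum (fun n : ℕ => 4 * ((n:ℝ) * (cb n * t^n)) + 2 * (cb n * t^n))
        (4 * (t * D) + 2 * (∑' n, cb n * t ^ n)) := (h2.mul_left 4).add (hfS.mul_left 2)
    have h3 : (fun n : ℕ => cb (n+1) * (((n:ℕ)+1 : ℝ) * t ^ n))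
        = fun n : ℕ => 4 * ((n:ℝ) * (cb n * t^n)) + 2 * (cb n * t^n) := by
      funext n
      have hrec := cb_rec n
      push_cast
      linear_combination t^n * hrec
    rw [h3] at h1
    exact h1.unique h4
  -- sqrt facts
  have hwpos : ∀ z ∈ Set.Ioo (-r) r, (0:ℝ) < 1 - 4*z := by
    intro z hz; nlinarith [hz.2]
  have hw' : ∀ z ∈ Set.Ioo (-r) r,
      HasDerivAt (fun y => Real.sqrt (1 - 4*y)) (-2 / Real.sqrt (1 - 4*z)) z := by
    intro z hz
    have hinner : HasDerivAt (fun y : ℝ => 1 - 4*y) (-4) z := by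
      simpa using ((hasDerivAt_id z).const_mul (4:ℝ)).const_sub 1
    have h := (Real.hasDerivAt_sqrt (ne_of_gt (hwpos z hz))).comp z hinner
    refine h.congr_deriv (Eq.symm ?_)
    have : Real.sqrt (1 - 4*z) > 0 := Real.sqrt_pos.2 (hwpos z hz)
    field_simp
    ring
  -- φ has zero derivative
  have hφ : ∀ z ∈ Set.Ioo (-r) r,
      HasDerivAt (fun y => (∑' n, cb n * y ^ n) * Real.sqrt (1 - 4*y)) 0 z := by
    intro z hz
    have h := (hDeriv z hz).mul (hw' z hz)
    refine h.congr_deriv (Eq.symm ?_)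
    have hwz : Real.sqrt (1 - 4*z) > 0 := Real.sqrt_pos.2 (hwpos z hz)
    have hsq : Real.sqrt (1 - 4*z) ^ 2 = 1 - 4*z := Real.sq_sqrt (hwpos z hz).le
    have hO := hODE z hz
    set D := ∑' n, cb n * ((n : ℝ) * z ^ (n-1))
    set f := ∑' n, cb n * z ^ n
    set w := Real.sqrt (1 - 4*z)
    field_simp
    linear_combination -(D * hsq) - hO
  have hconst := const_on_Ioo hr0 hφ ht
  have hf0 : (∑' n, cb n * (0:ℝ) ^ n) = 1 := by
    rw [tsum_eq_single 0 (fun n hn => by simp [zero_pow hn])]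
    simp [cb_zero]
  rw [show (1:ℝ) - 4 * t = 1 - 4*t by ring] at *
  calc (∑' n, cb n * t ^ n) * Real.sqrt (1 - 4 * t)
      = (∑' n, cb n * (0:ℝ) ^ n) * Real.sqrt (1 - 4*(0:ℝ)) := hconst
    _ = 1 := by rw [hf0]; simp

lemma one_sub_pos' {r : ℝ} (hr4 : r < 1/4) {t : ℝ} (ht : t ∈ Set.Ioo (-r) r) :
    (0:ℝ) < 1 - 4*t := by nlinarith [ht.2]

lemma sqrt_deriv {r : ℝ} (hr4 : r < 1/4) {t : ℝ} (ht : t ∈ Set.Ioo (-r) r) :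
    HasDerivAt (fun y => Real.sqrt (1 - 4*y)) (-2 / Real.sqrt (1 - 4*t)) t := by
  have hinner : HasDerivAt (fun y : ℝ => 1 - 4*y) (-4) t := by
    simpa using ((hasDerivAt_id t).const_mul (4:ℝ)).const_sub 1
  have h := (Real.hasDerivAt_sqrt (ne_of_gt (one_sub_pos' hr4 ht))).comp t hinner
  refine h.congr_deriv (Eq.symm ?_)
  have : Real.sqrt (1 - 4*t) > 0 := Real.sqrt_pos.2 (one_sub_pos' hr4 ht)
  field_simp
  ring

lemma f_eq {r : ℝ} (hr0 : 0 < r) (hr4 : r < 1/4) {t : ℝ} (ht : t ∈ Set.Ioo (-r) r) :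
    (∑' n, cb n * t ^ n) = 1 / Real.sqrt (1 - 4 * t) := by
  have hw : Real.sqrt (1 - 4*t) > 0 := Real.sqrt_pos.2 (one_sub_pos' hr4 ht)
  have := gen_fun hr0 hr4 ht
  field_simp
  linarith [this]

lemma summable_E {r : ℝ} (hr0 : 0 < r) (hr4 : r < 1/4) {t : ℝ} (ht : |t| ≤ r) :
    Summable (fun n : ℕ => cb (n+1) * t ^ n) := by
  apply Summable.of_norm_bounded
    ((summable_geometric_of_lt_one (by positivity : (0:ℝ) ≤ 4*r) (by linarith)).mul_left 4)
  intro n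
  rw [Real.norm_eq_abs, abs_mul, abs_pow]
  have h1 : |cb (n+1)| ≤ 4 ^ (n+1) := by rw [abs_of_pos (cb_pos _)]; exact cb_le _
  have h2 : |t| ^ n ≤ r ^ n := pow_le_pow_left₀ (abs_nonneg t) ht n
  calc |cb (n+1)| * |t| ^ n ≤ 4^(n+1) * r^n :=
        mul_le_mul h1 h2 (by positivity) (by positivity)
    _ = 4 * (4*r)^n := by rw [mul_pow]; ring

lemma E_eval {r : ℝ} (hr0 : 0 < r) (hr4 : r < 1/4) {t : ℝ} (ht : t ∈ Set.Ioo (-r) r) :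
    (∑' n : ℕ, cb (n+1) * t ^ n)
      = 4 / (Real.sqrt (1 - 4*t) * (1 + Real.sqrt (1 - 4*t))) := by
  have habs : |t| ≤ r := by rw [abs_le]; exact ⟨ht.1.le, ht.2.le⟩
  have hwpos : Real.sqrt (1 - 4*t) > 0 := Real.sqrt_pos.2 (one_sub_pos' hr4 ht)
  have hsq : Real.sqrt (1 - 4*t) ^ 2 = 1 - 4*t := Real.sq_sqrt (one_sub_pos' hr4 ht).le
  set w := Real.sqrt (1 - 4*t) with hwdef
  set E := ∑' n : ℕ, cb (n+1) * t ^ n with hEdef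
  by_cases ht0 : t = 0
  · subst ht0
    have : E = cb 1 := by
      rw [hEdef, tsum_eq_single 0 (fun n hn => by simp [zero_pow hn])]
      simp
    rw [this, cb_one]
    simp only [hwdef]
    norm_num
  · have hEsum : HasSum (fun n : ℕ => cb (n+1) * t ^ n) E := (summable_E hr0 hr4 habs).hasSum
    have h1 : HasSum (fun n : ℕ => cb (n+1) * t ^ (n+1)) (t * E) := by
      have h := hEsum.mul_left t
      rw [show (fun n : ℕ => cb (n+1) * t ^ (n+1)) = (fun i : ℕ => t * (cb (i+1) * t ^ i)) from ?_]
      · exact h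
      funext n; ring
    have h2 : HasSum (fun n : ℕ => cb n * t ^ n) (t * E + ∑ i ∈ Finset.range 1, cb i * t ^ i) :=
      (hasSum_nat_add_iff 1).1 h1
    have h3 : t * E + 1 = 1 / w := by
      have := h2.tsum_eq
      rw [f_eq hr0 hr4 ht, ← hwdef] at this
      simpa [cb_zero] using this.symm
    apply mul_left_cancel₀ ht0
    have hgoal : t * (4 / (w * (1 + w))) = 1 / w - 1 := by
      have h1w : (1:ℝ) + w > 0 := by linarith
      field_simp
      linear_combination hsq
    rw [hgoal]
    linarith [h3]

lemma F_deriv {r : ℝ} (hr4 : r < 1/4) {t : ℝ} (ht : t ∈ Set.Ioo (-r) r) :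
    HasDerivAt (fun z => 2 * Real.log 2 - 2 * Real.log (1 + Real.sqrt (1 - 4*z)))
      (4 / (Real.sqrt (1 - 4*t) * (1 + Real.sqrt (1 - 4*t)))) t := by
  have hwpos : Real.sqrt (1 - 4*t) > 0 := Real.sqrt_pos.2 (one_sub_pos' hr4 ht)
  have h1 : HasDerivAt (fun z => 1 + Real.sqrt (1 - 4*z)) (-2 / Real.sqrt (1 - 4*t)) t :=
    (sqrt_deriv hr4 ht).const_add 1
  have h2 := h1.log (by positivity)
  have h3 := (h2.const_mul 2).const_sub (2 * Real.log 2)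
  refine h3.congr_deriv (Eq.symm ?_)
  field_simp
  ring

lemma Eterm_bound {r : ℝ} {z : ℝ} (hz : |z| ≤ r) (n : ℕ) :
    ‖cb (n+1) * z ^ n‖ ≤ 4 * (4*r)^n := by
  have hr0 : 0 ≤ r := le_trans (abs_nonneg z) hz
  rw [Real.norm_eq_abs, abs_mul, abs_pow]
  have h1 : |cb (n+1)| ≤ 4 ^ (n+1) := by rw [abs_of_pos (cb_pos _)]; exact cb_le _
  have h2 : |z| ^ n ≤ r ^ n := pow_le_pow_left₀ (abs_nonneg z) hz n
  calc |cb (n+1)| * |z| ^ n ≤ 4^(n+1) * r^n :=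
        mul_le_mul h1 h2 (by positivity) (by positivity)
    _ = 4 * (4*r)^n := by rw [mul_pow]; ring

lemma summable_S0 : Summable (fun n : ℕ => cb (n+1) * (0:ℝ) ^ (n+1) / ((n:ℝ)+1)) := by
  have : (fun n : ℕ => cb (n+1) * (0:ℝ) ^ (n+1) / ((n:ℝ)+1)) = fun _ => 0 := by
    funext n; simp
  rw [this]; exact summable_zero

theorem stmt9 (x : ℝ) (hx : |x| < 1 / 4) :
    HasSum (fun ℓ : ℕ => (Nat.choose (2 * (ℓ + 1)) (ℓ + 1) : ℝ) * x ^ (ℓ + 1) / (ℓ + 1))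
      (2 * Real.log 2 - 2 * Real.log (1 + Real.sqrt (1 - 4 * x))) := by
  obtain ⟨r, hr0, hxr, hr4⟩ : ∃ r : ℝ, 0 < r ∧ |x| < r ∧ r < 1/4 :=
    ⟨|x|/2 + 1/8, by positivity, by linarith [abs_nonneg x], by linarith⟩
  have hq1 : 4 * r < 1 := by linarith
  have hq0 : (0:ℝ) ≤ 4 * r := by linarith
  have hxI : x ∈ Set.Ioo (-r) r := by rw [Set.mem_Ioo, ← abs_lt]; exact hxr
  have h0mem : (0:ℝ) ∈ Set.Ioo (-r) r := ⟨by linarith, hr0⟩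
  have habs : ∀ z : ℝ, z ∈ Set.Ioo (-r) r → |z| ≤ r := by
    intro z hz; rw [abs_le]; exact ⟨hz.1.le, hz.2.le⟩
  have hterm_deriv : ∀ (n : ℕ) (z : ℝ),
      HasDerivAt (fun y => cb (n+1) * y ^ (n+1) / ((n:ℝ)+1)) (cb (n+1) * z ^ n) z := by
    intro n z
    have h := ((hasDerivAt_pow (n+1) z).const_mul (cb (n+1))).div_const ((n:ℝ)+1)
    refine h.congr_deriv (Eq.symm ?_)
    have hne : ((n:ℝ)+1) ≠ 0 := by positivity
    simp only [Nat.add_sub_cancel]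
    push_cast
    field_simp
  have hsum_geom : Summable (fun n : ℕ => 4 * (4*r)^n) :=
    (summable_geometric_of_lt_one hq0 hq1).mul_left 4
  -- derivative of the sum
  have hS : ∀ y ∈ Set.Ioo (-r) r,
      HasDerivAt (fun z => ∑' n : ℕ, cb (n+1) * z ^ (n+1) / ((n:ℝ)+1))
        (∑' n : ℕ, cb (n+1) * y ^ n) y := fun y hy =>
    hasDerivAt_tsum_of_isPreconnected hsum_geom
      isOpen_Ioo (convex_Ioo (-r) r).isPreconnected
      (fun n z _ => hterm_deriv n z)
      (fun n z hz => Eterm_bound (habs z hz) n) h0mem summable_S0 hy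
  -- the difference has zero derivative
  have hψ : ∀ z ∈ Set.Ioo (-r) r,
      HasDerivAt (fun y => (∑' n : ℕ, cb (n+1) * y ^ (n+1) / ((n:ℝ)+1))
        - (2 * Real.log 2 - 2 * Real.log (1 + Real.sqrt (1 - 4*y)))) 0 z := by
    intro z hz
    have h := (hS z hz).sub (F_deriv hr4 hz)
    rw [E_eval hr0 hr4 hz, sub_self] at h
    exact h
  have hconst := const_on_Ioo hr0 hψ hxI
  have hS0 : (∑' n : ℕ, cb (n+1) * (0:ℝ) ^ (n+1) / ((n:ℝ)+1)) = 0 := by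
    have : (fun n : ℕ => cb (n+1) * (0:ℝ) ^ (n+1) / ((n:ℝ)+1)) = fun _ => 0 := by
      funext n; simp
    rw [this, tsum_zero]
  have hF0 : 2 * Real.log 2 - 2 * Real.log (1 + Real.sqrt (1 - 4*(0:ℝ))) = 0 := by
    norm_num
  have hSx : (∑' n : ℕ, cb (n+1) * x ^ (n+1) / ((n:ℝ)+1))
      = 2 * Real.log 2 - 2 * Real.log (1 + Real.sqrt (1 - 4*x)) := by
    rw [hS0, hF0] at hconst
    linarith [hconst]
  -- summability of the target series
  have hsumS : Summable (fun n : ℕ => cb (n+1) * x ^ (n+1) / ((n:ℝ)+1)) := by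
    apply Summable.of_norm_bounded hsum_geom
    intro n
    rw [Real.norm_eq_abs, abs_div, abs_of_pos (show (0:ℝ) < (n:ℝ)+1 by positivity)]
    have hden : (1:ℝ) ≤ (n:ℝ)+1 := by
      have : (0:ℝ) ≤ (n:ℝ) := Nat.cast_nonneg n
      linarith
    have step1 : |cb (n+1) * x ^ (n+1)| / ((n:ℝ)+1) ≤ |cb (n+1) * x ^ (n+1)| := by
      apply div_le_self (abs_nonneg _) hden
    refine step1.trans ?_
    have h1 : |cb (n+1)| ≤ 4 ^ (n+1) := by rw [abs_of_pos (cb_pos _)]; exact cb_le _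
    have h2 : |x| ^ (n+1) ≤ r ^ (n+1) := pow_le_pow_left₀ (abs_nonneg x) hxr.le (n+1)
    calc |cb (n+1) * x ^ (n+1)| = |cb (n+1)| * |x| ^ (n+1) := by rw [abs_mul, abs_pow]
      _ ≤ 4 ^ (n+1) * r ^ (n+1) := mul_le_mul h1 h2 (by positivity) (by positivity)
      _ ≤ 4 * (4*r)^n := by
          have hnn : (0:ℝ) ≤ (4*r)^n := pow_nonneg hq0 n
          have heq : (4:ℝ)^(n+1) * r^(n+1) = (4*r)^n * (4*r) := by rw [← mul_pow]; ring
          rw [heq]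
          nlinarith [hnn, hq1]
  have hfinal : HasSum (fun n : ℕ => cb (n+1) * x ^ (n+1) / ((n:ℝ)+1))
      (2 * Real.log 2 - 2 * Real.log (1 + Real.sqrt (1 - 4*x))) := by
    have := hsumS.hasSum
    rwa [hSx] at this
  have hfn : (fun ℓ : ℕ => (Nat.choose (2 * (ℓ + 1)) (ℓ + 1) : ℝ) * x ^ (ℓ + 1) / (ℓ + 1))
      = fun n : ℕ => cb (n+1) * x ^ (n+1) / ((n:ℝ)+1) := by
    funext ℓ
    have hc : cb (ℓ+1) = (Nat.choose (2 * (ℓ + 1)) (ℓ + 1) : ℝ) := by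
      simp [cb, Nat.centralBinom]
    rw [hc]
  rw [hfn]
  exact hfinal
end

section
/- For all real s, (1/4)·Σ_{ℓ=1}^∞ (tanh²(2s)/4)^ℓ · binom(2ℓ, ℓ)/ℓ = (1/2)·log(cosh(2s)) - log(cosh(s)). -/
open Real Set
set_option maxHeartbeats 1000000

lemma centralBinom_le_four_pow (n : ℕ) : (Nat.centralBinom n : ℝ) ≤ 4 ^ n := by
  have h : Nat.centralBinom n ≤ 4 ^ n := by
    calc Nat.centralBinom n = (2*n).choose n := rfl
      _ ≤ ∑ m ∈ Finset.range (2*n+1), (2*n).choose m :=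
          Finset.single_le_sum (fun i _ => Nat.zero_le _) (Finset.mem_range.2 (by omega))
      _ = 2^(2*n) := Nat.sum_range_choose (2*n)
      _ = 4^n := by rw [pow_mul]; norm_num
  exact_mod_cast h

lemma stage1 {z : ℝ} (hz : |z| < 1/4) :
    HasSum (fun n : ℕ => (Nat.centralBinom n : ℝ) * z ^ n) ((Real.sqrt (1 - 4*z))⁻¹) := by
  set r : ℝ := (|z| + 1/4)/2 with hr_def
  have habs : 0 ≤ |z| := abs_nonneg z
  have hr0 : 0 < r := by positivity
  have hzr : |z| < r := by rw [hr_def]; linarith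
  have hr4 : r < 1/4 := by rw [hr_def]; linarith
  set q : ℝ := 4*r with hq_def
  have hq0 : 0 < q := by positivity
  have hq1 : q < 1 := by rw [hq_def]; linarith
  set u : ℕ → ℝ := fun n => 4 * n * q^(n-1) with hu_def
  have hu : Summable u := by
    have h1 : Summable (fun n : ℕ => (n:ℝ) * q^n) := by
      simpa using summable_pow_mul_geometric_of_norm_lt_one 1 (r := q)
        (by rw [Real.norm_eq_abs, abs_of_pos hq0]; exact hq1)
    apply (h1.mul_left (4*q⁻¹)).congr
    intro n
    cases n with
    | zero => simp [hu_def]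
    | succ m =>
      rw [hu_def]
      simp only [Nat.add_sub_cancel]
      field_simp
      ring
  have hderiv : ∀ (n : ℕ) (x : ℝ), HasDerivAt (fun x : ℝ => (Nat.centralBinom n : ℝ) * x ^ n)
      ((Nat.centralBinom n : ℝ) * (n * x ^ (n-1))) x :=
    fun n x => (hasDerivAt_pow n x).const_mul _
  have hbound : ∀ (n : ℕ) (x : ℝ), x ∈ Ioo (-r) r →
      ‖(Nat.centralBinom n : ℝ) * (n * x ^ (n-1))‖ ≤ u n := by
    intro n x hx
    have hxr : |x| ≤ r := le_of_lt (abs_lt.2 ⟨hx.1, hx.2⟩)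
    cases n with
    | zero => simp [hu_def]
    | succ m =>
      rw [Real.norm_eq_abs, abs_mul, abs_mul, Nat.abs_cast, Nat.abs_cast]
      simp only [Nat.add_sub_cancel]
      have h1 : (Nat.centralBinom (m+1) : ℝ) ≤ 4^(m+1) := centralBinom_le_four_pow _
      have h2 : |x^m| ≤ r^m := by
        rw [abs_pow]
        exact pow_le_pow_left₀ (abs_nonneg x) hxr m
      have h3 : (0:ℝ) ≤ ((m+1 : ℕ) : ℝ) := by positivity
      calc (Nat.centralBinom (m+1) : ℝ) * (((m+1 : ℕ) : ℝ) * |x^m|)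
          ≤ 4^(m+1) * (((m+1 : ℕ) : ℝ) * r^m) := by
            apply mul_le_mul h1 (by apply mul_le_mul_of_nonneg_left h2 h3)
              (by positivity) (by positivity)
        _ = 4 * ((m+1 : ℕ) : ℝ) * q^m := by
            rw [hq_def, mul_pow]; ring
        _ = u (m+1) := by simp [hu_def]
  have h0mem : (0:ℝ) ∈ Ioo (-r) r := ⟨by linarith, hr0⟩
  have hsum0 : Summable (fun n : ℕ => (Nat.centralBinom n : ℝ) * (0:ℝ) ^ n) := by
    apply Summable.congr ((hasSum_ite_eq (0:ℕ) (1:ℝ)).summable)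
    intro n
    cases n with
    | zero => simp [Nat.centralBinom_zero]
    | succ m => simp
  have hconvex : Convex ℝ (Ioo (-r) r) := convex_Ioo _ _
  have hsummable : ∀ x ∈ Ioo (-r) r, Summable (fun n : ℕ => (Nat.centralBinom n : ℝ) * x ^ n) :=
    fun x hx => summable_of_summable_hasDerivAt_of_isPreconnected hu isOpen_Ioo
      hconvex.isPreconnected (fun n y _ => hderiv n y) (fun n y hy => hbound n y hy)
      h0mem hsum0 hx
  set H : ℝ → ℝ := fun x => ∑' n : ℕ, (Nat.centralBinom n : ℝ) * x ^ n with hH_def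
  have hHderiv : ∀ x ∈ Ioo (-r) r,
      HasDerivAt H (∑' n : ℕ, (Nat.centralBinom n : ℝ) * (n * x ^ (n-1))) x :=
    fun x hx => hasDerivAt_tsum_of_isPreconnected hu isOpen_Ioo hconvex.isPreconnected
      (fun n y _ => hderiv n y) (fun n y hy => hbound n y hy) h0mem hsum0 hx
  have hkey : ∀ x ∈ Ioo (-r) r,
      (1 - 4*x) * (∑' n : ℕ, (Nat.centralBinom n : ℝ) * (n * x ^ (n-1))) = 2 * H x := by
    intro x hx
    set D : ℝ := ∑' n : ℕ, (Nat.centralBinom n : ℝ) * (n * x ^ (n-1)) with hD_def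
    have hDsummable : Summable (fun n : ℕ => (Nat.centralBinom n : ℝ) * (n * x ^ (n-1))) :=
      Summable.of_norm_bounded hu (fun n => hbound n x hx)
    have hD : HasSum (fun n : ℕ => (Nat.centralBinom n : ℝ) * (n * x ^ (n-1))) D :=
      hDsummable.hasSum
    have hHx : HasSum (fun n : ℕ => (Nat.centralBinom n : ℝ) * x ^ n) (H x) :=
      (hsummable x hx).hasSum
    have hD1 : HasSum (fun n : ℕ => (Nat.centralBinom (n+1) : ℝ) * (((n:ℝ)+1) * x ^ n)) D := by
      have h := (hasSum_nat_add_iff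
        (f := fun n : ℕ => (Nat.centralBinom n : ℝ) * (n * x ^ (n-1))) 1).mpr
        (by simpa using hD)
      convert h using 2 with n
      · rfl
      push_cast
      ring_nf
    have hD2 : HasSum (fun n : ℕ => (2*(2*(n:ℝ)+1)) * ((Nat.centralBinom n : ℝ) * x ^ n)) D := by
      have heq : (fun n : ℕ => (Nat.centralBinom (n+1) : ℝ) * (((n:ℝ)+1) * x ^ n))
          = fun n : ℕ => (2*(2*(n:ℝ)+1)) * ((Nat.centralBinom n : ℝ) * x ^ n) := by
        funext n
        have h := Nat.succ_mul_centralBinom_succ n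
        have h' : ((n:ℝ)+1) * (Nat.centralBinom (n+1) : ℝ)
            = 2*(2*(n:ℝ)+1) * (Nat.centralBinom n : ℝ) := by exact_mod_cast h
        calc (Nat.centralBinom (n+1) : ℝ) * (((n:ℝ)+1) * x ^ n)
            = (((n:ℝ)+1) * (Nat.centralBinom (n+1) : ℝ)) * x ^ n := by ring
          _ = (2*(2*(n:ℝ)+1)) * ((Nat.centralBinom n : ℝ) * x ^ n) := by rw [h']; ring
      rw [← heq]; exact hD1
    have hxD : HasSum (fun n : ℕ => 4*((n:ℝ) * ((Nat.centralBinom n : ℝ) * x ^ n))) (4*(x * D)) := by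
      have h := (hD.mul_left x).mul_left 4
      convert h using 2 with n
      · rfl
      cases n with
      | zero => simp
      | succ m =>
        simp only [Nat.add_sub_cancel, pow_succ]
        push_cast
        ring
    have hsub : HasSum (fun n : ℕ => (2*(2*(n:ℝ)+1)) * ((Nat.centralBinom n : ℝ) * x ^ n)
        - 4*((n:ℝ) * ((Nat.centralBinom n : ℝ) * x ^ n))) (D - 4*(x*D)) := hD2.sub hxD
    have hsub' : HasSum (fun n : ℕ => 2 * ((Nat.centralBinom n : ℝ) * x ^ n)) (D - 4*(x*D)) := by
      convert hsub using 2 with n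
      ring
    have h2H : HasSum (fun n : ℕ => 2 * ((Nat.centralBinom n : ℝ) * x ^ n)) (2 * H x) :=
      hHx.mul_left 2
    have := hsub'.unique h2H
    linarith [this]
  -- φ = sqrt(1-4x) * H x is constant on Ioo
  have hφ : ∀ x ∈ Ioo (-r) r, HasDerivAt (fun x => Real.sqrt (1 - 4*x) * H x) 0 x := by
    intro x hx
    have hx4 : 0 < 1 - 4*x := by
      have : x < r := hx.2
      linarith
    set w : ℝ := Real.sqrt (1 - 4*x) with hw_def
    have hw0 : 0 < w := Real.sqrt_pos.2 hx4
    have hw2 : w^2 = 1 - 4*x := Real.sq_sqrt hx4.le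
    have hinner : HasDerivAt (fun x : ℝ => 1 - 4*x) (-4) x := by
      simpa using ((hasDerivAt_id x).const_mul 4).const_sub 1
    have hs : HasDerivAt (fun x : ℝ => Real.sqrt (1 - 4*x)) (1/(2*w) * (-4)) x :=
      (Real.hasDerivAt_sqrt (ne_of_gt hx4)).comp x hinner
    set D : ℝ := ∑' n : ℕ, (Nat.centralBinom n : ℝ) * (n * x ^ (n-1)) with hD_def
    have hmul := hs.mul (hHderiv x hx)
    have hDval : D = 2 * H x / (1 - 4*x) := by
      have := hkey x hx
      rw [eq_div_iff hx4.ne', hD_def]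
      linarith
    have hval : 1/(2*w) * (-4) * H x + w * D = 0 := by
      rw [hDval, ← hw2]
      field_simp
      ring
    rw [hval] at hmul
    exact hmul
  have hconst : ∀ a ∈ Ioo (-r) r, ∀ b ∈ Ioo (-r) r,
      Real.sqrt (1 - 4*a) * H a = Real.sqrt (1 - 4*b) * H b := by
    intro a ha b hb
    apply hconvex.is_const_of_fderivWithin_eq_zero
      (fun x hx => (hφ x hx).differentiableAt.differentiableWithinAt) _ ha hb
    intro x hx
    rw [fderivWithin_of_isOpen isOpen_Ioo hx, (hφ x hx).hasFDerivAt.fderiv]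
    ext y
    simp
  have hzmem : z ∈ Ioo (-r) r := by
    rcases abs_lt.1 hzr with ⟨h1, h2⟩
    exact ⟨h1, h2⟩
  have hH0 : H 0 = 1 := by
    have hre : H 0 = ∑' n : ℕ, (Nat.centralBinom n : ℝ) * (0:ℝ) ^ n := rfl
    rw [hre, tsum_eq_single 0 (by intro n hn; simp [zero_pow hn])]
    simp [Nat.centralBinom_zero]
  have h1 : Real.sqrt (1 - 4*z) * H z = 1 := by
    have := hconst z hzmem 0 h0mem
    rw [hH0] at this
    simpa using this
  have hsqrt_pos : 0 < Real.sqrt (1 - 4*z) := by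
    apply Real.sqrt_pos.2
    have : z < r := hzmem.2
    linarith
  have hHz : H z = (Real.sqrt (1 - 4*z))⁻¹ := by
    field_simp at h1 ⊢
    linarith
  have hfinal : HasSum (fun n : ℕ => (Nat.centralBinom n : ℝ) * z ^ n) (H z) :=
    (hsummable z hzmem).hasSum
  rwa [hHz] at hfinal

lemma abs_tanh_lt_one (x : ℝ) : |Real.tanh x| < 1 := by
  rw [Real.tanh_eq_sinh_div_cosh, abs_div, abs_of_pos (Real.cosh_pos x),
    div_lt_one (Real.cosh_pos x)]
  have h1 : Real.sinh x < Real.cosh x := Real.sinh_lt_cosh x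
  have h2 : -Real.cosh x < Real.sinh x := by
    have h := Real.sinh_lt_cosh (-x)
    rw [Real.sinh_neg, Real.cosh_neg] at h
    linarith
  exact abs_lt.2 ⟨h2, h1⟩

lemma one_sub_tanh_sq (x : ℝ) : 1 - Real.tanh x ^ 2 = (Real.cosh x ^ 2)⁻¹ := by
  have hc := (Real.cosh_pos x).ne'
  rw [Real.tanh_eq_sinh_div_cosh, div_pow]
  field_simp
  linarith [Real.cosh_sq_sub_sinh_sq x]

lemma hasDerivAt_tanh (x : ℝ) : HasDerivAt Real.tanh (1 - Real.tanh x ^ 2) x := by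
  have hc := (Real.cosh_pos x).ne'
  have h := (Real.hasDerivAt_sinh x).div (Real.hasDerivAt_cosh x) hc
  have hfun : (Real.sinh / Real.cosh) = Real.tanh := by
    funext y; rw [Pi.div_apply, Real.tanh_eq_sinh_div_cosh]
  rw [hfun] at h
  convert h using 1
  · rfl
  · rfl
  rw [Real.tanh_eq_sinh_div_cosh, div_pow]
  field_simp

lemma hasDerivAt_A (ℓ : ℕ) (y : ℝ) :
    HasDerivAt (fun x : ℝ => Real.tanh (2*x) ^ 2 / 4)
      (Real.tanh (2*y) * (1 - Real.tanh (2*y) ^ 2)) y := by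
  have h2 : HasDerivAt (fun x : ℝ => 2*x) 2 y := by
    simpa using (hasDerivAt_id y).const_mul 2
  have ht : HasDerivAt (fun x : ℝ => Real.tanh (2*x)) ((1 - Real.tanh (2*y) ^ 2) * 2) y :=
    (hasDerivAt_tanh (2*y)).comp y h2
  have hp := (ht.pow 2).div_const 4
  convert hp using 1
  · rfl
  · rfl
  · rfl
  norm_num
  ring

lemma hasDerivAt_term (ℓ : ℕ) (y : ℝ) :
    HasDerivAt (fun x : ℝ =>
        (1 / 4) * ((Real.tanh (2 * x)) ^ 2 / 4) ^ (ℓ + 1) *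
          (Nat.choose (2 * (ℓ + 1)) (ℓ + 1) : ℝ) / ((ℓ:ℝ) + 1))
      ((Nat.centralBinom (ℓ+1) : ℝ) * ((Real.tanh (2*y)) ^ 2 / 4) ^ ℓ *
        (Real.tanh (2*y) * (1 - Real.tanh (2*y) ^ 2)) / 4) y := by
  have h := ((((hasDerivAt_A ℓ y).pow (ℓ+1)).const_mul (1/4 : ℝ)).mul_const
    ((Nat.choose (2 * (ℓ + 1)) (ℓ + 1) : ℝ))).div_const ((ℓ:ℝ) + 1)
  convert h using 1
  · rfl
  · rfl
  · rfl
  have hcb : (Nat.centralBinom (ℓ+1) : ℝ) = (Nat.choose (2 * (ℓ + 1)) (ℓ + 1) : ℝ) := rfl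
  have hne : ((ℓ:ℝ) + 1) ≠ 0 := by positivity
  rw [hcb]
  simp only [Nat.add_sub_cancel]
  push_cast
  field_simp

lemma hasSum_deriv (y : ℝ) :
    HasSum (fun ℓ : ℕ => (Nat.centralBinom (ℓ+1) : ℝ) * ((Real.tanh (2*y)) ^ 2 / 4) ^ ℓ *
        (Real.tanh (2*y) * (1 - Real.tanh (2*y) ^ 2)) / 4)
      (Real.tanh (2*y) - Real.tanh y) := by
  by_cases hT : Real.tanh (2*y) = 0
  · have hy : y = 0 := by
      rw [Real.tanh_eq_sinh_div_cosh, div_eq_zero_iff] at hT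
      rcases hT with h | h
      · have := Real.sinh_eq_zero.1 h
        linarith
      · exact absurd h (Real.cosh_pos _).ne'
    subst hy
    norm_num [Real.tanh_zero]
  · set T := Real.tanh (2*y) with hT_def
    have hT1 : |T| < 1 := _root_.abs_tanh_lt_one _
    have hT2 : T ^ 2 < 1 := by
      have := sq_abs T
      nlinarith [abs_nonneg T]
    have hznn : (0:ℝ) ≤ T^2/4 := by positivity
    have hz : |T^2/4| < 1/4 := by
      rw [abs_of_nonneg hznn]; nlinarith
    have h1 := stage1 hz
    have h14 : 1 - 4*(T^2/4) = 1 - T^2 := by ring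
    rw [h14] at h1
    have h2 : HasSum (fun n : ℕ => (Nat.centralBinom (n+1) : ℝ) * (T^2/4) ^ (n+1))
        ((Real.sqrt (1 - T^2))⁻¹ - 1) := by
      apply (hasSum_nat_add_iff
        (f := fun n : ℕ => (Nat.centralBinom n : ℝ) * (T^2/4) ^ n) 1).mpr
      convert h1 using 1
      · rfl
      simp [Nat.centralBinom_zero]
    have hc2 := Real.cosh_pos (2*y)
    have hcy := Real.cosh_pos y
    have hw : Real.sqrt (1 - T^2) = (Real.cosh (2*y))⁻¹ := by
      rw [hT_def, one_sub_tanh_sq, ← inv_pow, Real.sqrt_sq (by positivity)]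
    have h3 := h2.mul_right ((1 - T^2)/T)
    have heq : (fun n : ℕ => (Nat.centralBinom (n+1) : ℝ) * (T^2/4) ^ (n+1) * ((1 - T^2)/T))
        = fun n : ℕ => (Nat.centralBinom (n+1) : ℝ) * (T^2/4) ^ n *
            (T * (1 - T^2)) / 4 := by
      funext n
      rw [pow_succ]
      field_simp
    rw [heq] at h3
    convert h3 using 1
    · rfl
    have hs2 : Real.sinh (2*y) ≠ 0 := by
      intro h
      apply hT
      rw [hT_def, Real.tanh_eq_sinh_div_cosh, h, zero_div]
    have hsy : Real.sinh y ≠ 0 := by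
      intro h
      apply hs2
      rw [Real.sinh_two_mul, h]; ring
    rw [hw, hT_def, one_sub_tanh_sq, Real.tanh_eq_sinh_div_cosh,
      Real.tanh_eq_sinh_div_cosh, Real.sinh_two_mul, Real.cosh_two_mul]
    have hrel := Real.cosh_sq_sub_sinh_sq y
    have hc2' : Real.cosh y ^ 2 + Real.sinh y ^ 2 > 0 := by positivity
    rw [inv_inv]
    field_simp
    linear_combination (2 * Real.sinh y ^ 2 - 1) * hrel

lemma hasDerivAt_G (y : ℝ) :
    HasDerivAt (fun x : ℝ => (1/2) * Real.log (Real.cosh (2*x)) - Real.log (Real.cosh x))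
      (Real.tanh (2*y) - Real.tanh y) y := by
  have h2 : HasDerivAt (fun x : ℝ => 2*x) 2 y := by
    simpa using (hasDerivAt_id y).const_mul 2
  have hc2 : HasDerivAt (fun x : ℝ => Real.cosh (2*x)) (Real.sinh (2*y) * 2) y :=
    (Real.hasDerivAt_cosh (2*y)).comp y h2
  have hl2 : HasDerivAt (fun x : ℝ => Real.log (Real.cosh (2*x)))
      ((Real.cosh (2*y))⁻¹ * (Real.sinh (2*y) * 2)) y := by
    exact (Real.hasDerivAt_log (Real.cosh_pos (2*y)).ne').comp y hc2
  have hl1 : HasDerivAt (fun x : ℝ => Real.log (Real.cosh x))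
      ((Real.cosh y)⁻¹ * Real.sinh y) y :=
    (Real.hasDerivAt_log (Real.cosh_pos y).ne').comp y (Real.hasDerivAt_cosh y)
  have h := (hl2.const_mul (1/2 : ℝ)).sub hl1
  convert h using 1
  · rfl
  · rfl
  · rfl
  rw [Real.tanh_eq_sinh_div_cosh, Real.tanh_eq_sinh_div_cosh]
  have := (Real.cosh_pos (2*y)).ne'
  have := (Real.cosh_pos y).ne'
  field_simp

theorem stmt10 (s : ℝ) :
    HasSum (fun ℓ : ℕ =>
        (1 / 4) * ((Real.tanh (2 * s)) ^ 2 / 4) ^ (ℓ + 1) *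
          (Nat.choose (2 * (ℓ + 1)) (ℓ + 1) : ℝ) / (ℓ + 1))
      ((1 / 2) * Real.log (Real.cosh (2 * s)) - Real.log (Real.cosh s)) := by
  set R : ℝ := |s| + 1 with hR_def
  have habs : 0 ≤ |s| := abs_nonneg s
  have hR : 0 < R := by positivity
  have hsmem : s ∈ Ioo (-R) R := by
    constructor
    · have := neg_abs_le s; rw [hR_def]; linarith
    · have := le_abs_self s; rw [hR_def]; linarith
  have h0mem : (0:ℝ) ∈ Ioo (-R) R := ⟨by linarith, hR⟩
  set q : ℝ := 1 - ((Real.cosh (2*R)) ^ 2)⁻¹ with hq_def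
  have hcR : 1 ≤ Real.cosh (2*R) := Real.one_le_cosh _
  have hq0 : 0 ≤ q := by
    rw [hq_def]
    have : ((Real.cosh (2*R)) ^ 2)⁻¹ ≤ 1 := by
      apply inv_le_one_of_one_le₀
      nlinarith
    linarith
  have hq1 : q < 1 := by
    rw [hq_def]
    have : 0 < ((Real.cosh (2*R)) ^ 2)⁻¹ := by positivity
    linarith
  have hu : Summable (fun ℓ : ℕ => q ^ ℓ) := summable_geometric_of_lt_one hq0 hq1
  have hbound : ∀ (ℓ : ℕ) (y : ℝ), y ∈ Ioo (-R) R →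
      ‖(Nat.centralBinom (ℓ+1) : ℝ) * ((Real.tanh (2*y)) ^ 2 / 4) ^ ℓ *
        (Real.tanh (2*y) * (1 - Real.tanh (2*y) ^ 2)) / 4‖ ≤ q ^ ℓ := by
    intro ℓ y hy
    set T := Real.tanh (2*y) with hT_def
    have hT1 : |T| < 1 := _root_.abs_tanh_lt_one _
    have hT2 : T ^ 2 < 1 := by
      have := sq_abs T
      nlinarith [abs_nonneg T]
    have hTq : T ^ 2 ≤ q := by
      rw [hT_def, hq_def]
      have h1 : 1 - Real.tanh (2*y) ^ 2 = ((Real.cosh (2*y)) ^ 2)⁻¹ := one_sub_tanh_sq _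
      have h2 : Real.cosh (2*y) ≤ Real.cosh (2*R) := by
        apply Real.cosh_le_cosh.2
        rw [abs_mul, abs_mul]
        have h3 : |y| ≤ R := by
          rcases hy with ⟨hy1, hy2⟩
          exact abs_le.2 ⟨by linarith, by linarith⟩
        have h4 : |R| = R := abs_of_pos hR
        rw [h4]
        simp only [Nat.abs_ofNat]
        nlinarith [abs_nonneg y]
      have h5 : ((Real.cosh (2*R)) ^ 2)⁻¹ ≤ ((Real.cosh (2*y)) ^ 2)⁻¹ := by
        apply inv_anti₀ (by positivity)
        nlinarith [Real.cosh_pos (2*y)]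
      linarith [h1 ▸ (by linarith : (1:ℝ) - Real.tanh (2*y) ^ 2 ≥ 0)]
    have h1T : (0:ℝ) ≤ 1 - T ^ 2 := by linarith
    have hstep1 : |T| * (1 - T ^ 2) ≤ 1 := by nlinarith [abs_nonneg T]
    have habseq : ‖(Nat.centralBinom (ℓ+1) : ℝ) * ((Real.tanh (2*y)) ^ 2 / 4) ^ ℓ *
        (Real.tanh (2*y) * (1 - Real.tanh (2*y) ^ 2)) / 4‖
        = (Nat.centralBinom (ℓ+1) : ℝ) * (T ^ 2 / 4) ^ ℓ * (|T| * (1 - T ^ 2)) / 4 := by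
      rw [Real.norm_eq_abs, abs_div, abs_mul, abs_mul, abs_mul, Nat.abs_cast,
        abs_of_nonneg (by positivity : (0:ℝ) ≤ ((Real.tanh (2*y)) ^ 2 / 4) ^ ℓ),
        abs_of_nonneg h1T]
      norm_num
      rfl
    rw [habseq]
    calc (Nat.centralBinom (ℓ+1) : ℝ) * (T ^ 2 / 4) ^ ℓ * (|T| * (1 - T ^ 2)) / 4
        ≤ 4 ^ (ℓ+1) * (T ^ 2 / 4) ^ ℓ * 1 / 4 := by
          gcongr
          · exact centralBinom_le_four_pow (ℓ+1)
      _ = (T ^ 2) ^ ℓ := by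
          rw [div_pow, pow_succ]
          field_simp
      _ ≤ q ^ ℓ := pow_le_pow_left₀ (sq_nonneg T) hTq ℓ
  have hconvex : Convex ℝ (Ioo (-R) R) := convex_Ioo _ _
  have hsum0 : Summable (fun ℓ : ℕ =>
      (1 / 4) * ((Real.tanh (2 * (0:ℝ))) ^ 2 / 4) ^ (ℓ + 1) *
        (Nat.choose (2 * (ℓ + 1)) (ℓ + 1) : ℝ) / ((ℓ:ℝ) + 1)) := by
    apply summable_zero.congr
    intro ℓ
    simp [Real.tanh_zero]
  have hsummable : ∀ x ∈ Ioo (-R) R, Summable (fun ℓ : ℕ =>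
      (1 / 4) * ((Real.tanh (2 * x)) ^ 2 / 4) ^ (ℓ + 1) *
        (Nat.choose (2 * (ℓ + 1)) (ℓ + 1) : ℝ) / ((ℓ:ℝ) + 1)) :=
    fun x hx => summable_of_summable_hasDerivAt_of_isPreconnected hu isOpen_Ioo
      hconvex.isPreconnected (fun ℓ y _ => hasDerivAt_term ℓ y)
      (fun ℓ y hy => hbound ℓ y hy) h0mem hsum0 hx
  set F : ℝ → ℝ := fun x => ∑' ℓ : ℕ,
      (1 / 4) * ((Real.tanh (2 * x)) ^ 2 / 4) ^ (ℓ + 1) *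
        (Nat.choose (2 * (ℓ + 1)) (ℓ + 1) : ℝ) / ((ℓ:ℝ) + 1) with hF_def
  have hFderiv : ∀ x ∈ Ioo (-R) R, HasDerivAt F (Real.tanh (2*x) - Real.tanh x) x := by
    intro x hx
    have h := hasDerivAt_tsum_of_isPreconnected hu isOpen_Ioo hconvex.isPreconnected
      (fun ℓ y _ => hasDerivAt_term ℓ y) (fun ℓ y hy => hbound ℓ y hy) h0mem hsum0 hx
    rwa [(hasSum_deriv x).tsum_eq] at h
  have hφ : ∀ x ∈ Ioo (-R) R, HasDerivAt
      (fun x => F x - ((1/2) * Real.log (Real.cosh (2*x)) - Real.log (Real.cosh x))) 0 x := by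
    intro x hx
    have h := (hFderiv x hx).fun_sub (hasDerivAt_G x)
    simpa using h
  have hconst := hconvex.is_const_of_fderivWithin_eq_zero
    (fun x hx => (hφ x hx).differentiableAt.differentiableWithinAt)
    (fun x hx => by
      rw [fderivWithin_of_isOpen isOpen_Ioo hx, (hφ x hx).hasFDerivAt.fderiv]
      ext y
      simp)
    hsmem h0mem
  have h2 : F s - ((1/2) * Real.log (Real.cosh (2*s)) - Real.log (Real.cosh s))
      = F 0 - ((1/2) * Real.log (Real.cosh (2*(0:ℝ))) - Real.log (Real.cosh 0)) := hconst
  have hF0 : F 0 = 0 := by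
    have hre : F 0 = ∑' ℓ : ℕ,
        (1 / 4) * ((Real.tanh (2 * (0:ℝ))) ^ 2 / 4) ^ (ℓ + 1) *
          (Nat.choose (2 * (ℓ + 1)) (ℓ + 1) : ℝ) / ((ℓ:ℝ) + 1) := rfl
    rw [hre]
    calc (∑' ℓ : ℕ, (1 / 4) * ((Real.tanh (2 * (0:ℝ))) ^ 2 / 4) ^ (ℓ + 1) *
          (Nat.choose (2 * (ℓ + 1)) (ℓ + 1) : ℝ) / ((ℓ:ℝ) + 1))
        = ∑' _ : ℕ, (0:ℝ) := by
          apply tsum_congr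
          intro ℓ
          simp [Real.tanh_zero]
      _ = 0 := tsum_zero
  have hFs : F s = (1/2) * Real.log (Real.cosh (2*s)) - Real.log (Real.cosh s) := by
    rw [hF0] at h2
    norm_num [Real.cosh_zero, Real.log_one] at h2
    linarith
  have hfinal : HasSum (fun ℓ : ℕ =>
      (1 / 4) * ((Real.tanh (2 * s)) ^ 2 / 4) ^ (ℓ + 1) *
        (Nat.choose (2 * (ℓ + 1)) (ℓ + 1) : ℝ) / ((ℓ:ℝ) + 1)) (F s) :=
    (hsummable s hsmem).hasSum
  rwa [hFs] at hfinal
end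

section
/- Define h₁(x) = ((x+1)/2)·log((x+1)/2) - ((x-1)/2)·log((x-1)/2) for x > 1 and h₂(x) = log(x). Then the function x ↦ h₁(x) - h₂(x) is monotonically increasing on (1, ∞), and for all x > 1, h₁(x) - h₂(x) < 1 - log(2), with lim_{x→∞} (h₁(x) - h₂(x)) = 1 - log(2). -/
noncomputable def gfun : ℝ → ℝ := fun x =>
  ((x + 1) / 2) * Real.log ((x + 1) / 2) - ((x - 1) / 2) * Real.log ((x - 1) / 2) - Real.log x

lemma aux_logIneq {t : ℝ} (h0 : 0 < t) (h1 : t < 1) :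
    2 * t < Real.log (1 + t) - Real.log (1 - t) := by
  set p : ℝ → ℝ := fun t => Real.log (1 + t) - Real.log (1 - t) - 2 * t with hp
  have hmono : StrictMonoOn p (Set.Ico 0 1) := by
    apply strictMonoOn_of_deriv_pos (convex_Ico 0 1)
    · apply ContinuousOn.sub
      apply ContinuousOn.sub
      · exact ((continuous_const.add continuous_id).continuousOn).log
          (fun x hx => by simp only [Set.mem_Ico] at hx; simp only [Pi.add_apply, id_eq]; nlinarith [hx.1])
      · exact ((continuous_const.sub continuous_id).continuousOn).log
          (fun x hx => by simp only [Set.mem_Ico] at hx; simp only [Pi.sub_apply, id_eq]; nlinarith [hx.2])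
      · exact (continuous_const.mul continuous_id).continuousOn
    · intro t ht
      rw [interior_Ico] at ht
      obtain ⟨ht0, ht1⟩ := ht
      have h1p : (0:ℝ) < 1 + t := by linarith
      have h1m : (0:ℝ) < 1 - t := by linarith
      have d1 : HasDerivAt (fun t : ℝ => Real.log (1 + t)) (1 / (1 + t)) t := by
        have := (((hasDerivAt_id t).const_add 1)).log h1p.ne'
        simpa using this
      have d2 : HasDerivAt (fun t : ℝ => Real.log (1 - t)) (-1 / (1 - t)) t := by
        have := (((hasDerivAt_id t).const_sub 1)).log h1m.ne'
        simpa using this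
      have d3 : HasDerivAt p (1 / (1 + t) - (-1 / (1 - t)) - 2) t := by
        have := ((d1.sub d2).sub ((hasDerivAt_id t).const_mul 2))
        exact this.congr_deriv (by ring)
      rw [d3.deriv]
      rw [div_sub_div _ _ h1p.ne' h1m.ne']
      have : (1:ℝ) * (1 - t) - (1 + t) * (-1) = 2 := by ring
      rw [this]
      rw [sub_pos, lt_div_iff₀ (by nlinarith)]
      nlinarith
  have h0' : p 0 < p t := hmono (by simp) (by simp [Set.mem_Ico]; constructor <;> linarith) h0
  simp only [hp] at h0'
  simp at h0'
  linarith

lemma gfun_deriv {x : ℝ} (hx : 1 < x) :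
    HasDerivAt gfun ((1/2) * (Real.log (x+1) - Real.log (x-1)) - 1/x) x := by
  have hx0 : (0:ℝ) < x := by linarith
  have hp : (0:ℝ) < (x+1)/2 := by linarith
  have hm : (0:ℝ) < (x-1)/2 := by linarith
  have du : HasDerivAt (fun y : ℝ => (y+1)/2) (1/2) x := by
    simpa using ((hasDerivAt_id x).add_const 1).div_const 2
  have dv : HasDerivAt (fun y : ℝ => (y-1)/2) (1/2) x := by
    simpa using ((hasDerivAt_id x).sub_const 1).div_const 2
  have d1 : HasDerivAt (fun y : ℝ => ((y+1)/2) * Real.log ((y+1)/2))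
      ((1/2) * Real.log ((x+1)/2) + ((x+1)/2) * ((1/2) / ((x+1)/2))) x :=
    du.mul (du.log hp.ne')
  have d2 : HasDerivAt (fun y : ℝ => ((y-1)/2) * Real.log ((y-1)/2))
      ((1/2) * Real.log ((x-1)/2) + ((x-1)/2) * ((1/2) / ((x-1)/2))) x :=
    dv.mul (dv.log hm.ne')
  have d3 := (d1.sub d2).sub (Real.hasDerivAt_log hx0.ne')
  refine d3.congr_deriv ?_
  have e1 : Real.log ((x+1)/2) = Real.log (x+1) - Real.log 2 :=
    Real.log_div (by linarith) two_ne_zero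
  have e2 : Real.log ((x-1)/2) = Real.log (x-1) - Real.log 2 :=
    Real.log_div (by linarith) two_ne_zero
  have c1 : ((x+1)/2) * ((1/2) / ((x+1)/2)) = 1/2 := by field_simp
  have c2 : ((x-1)/2) * ((1/2) / ((x-1)/2)) = 1/2 := by
    rw [mul_div_assoc']
    rw [mul_comm, mul_div_assoc, div_self hm.ne']
    ring
  rw [e1, e2, c1, c2]
  ring

lemma gfun_mono : StrictMonoOn gfun (Set.Ioi 1) := by
  apply strictMonoOn_of_deriv_pos (convex_Ioi 1)
  · intro x hx
    exact ((gfun_deriv hx).differentiableAt.continuousAt).continuousWithinAt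
  · intro x hx
    rw [interior_Ioi] at hx
    have hx1 : (1:ℝ) < x := hx
    have hx0 : (0:ℝ) < x := by linarith
    rw [(gfun_deriv hx1).deriv]
    have ht0 : (0:ℝ) < 1/x := by positivity
    have ht1 : 1/x < 1 := by rw [div_lt_one hx0]; linarith
    have key := aux_logIneq ht0 ht1
    have e1 : (1:ℝ) + 1/x = (x+1)/x := by field_simp
    have e2 : (1:ℝ) - 1/x = (x-1)/x := by field_simp
    rw [e1, e2, Real.log_div (by linarith) hx0.ne', Real.log_div (by linarith) hx0.ne'] at key
    have : 2 * (1/x) < Real.log (x+1) - Real.log (x-1) := by linarith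
    have h2 : 2 * (1/x) = 2/x := by ring
    linarith

open Filter in
lemma gfun_tendsto : Tendsto gfun atTop (nhds (1 - Real.log 2)) := by
  have h1 : Tendsto (fun x : ℝ => x * Real.log (1 + 1 / x)) atTop (nhds 1) :=
    Real.tendsto_mul_log_one_add_div_atTop 1
  have h2 : Tendsto (fun x : ℝ => x * Real.log (1 + (-1) / x)) atTop (nhds (-1)) :=
    Real.tendsto_mul_log_one_add_div_atTop (-1)
  have h3 : Tendsto (fun x : ℝ => Real.log (1 - 1 / x ^ 2)) atTop (nhds 0) := by
    have hb : Tendsto (fun x : ℝ => 1 - 1 / x ^ 2) atTop (nhds 1) := by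
      have hsq : Tendsto (fun x : ℝ => x ^ 2) atTop atTop :=
        tendsto_pow_atTop two_ne_zero
      have : Tendsto (fun x : ℝ => 1 / x ^ 2) atTop (nhds 0) := by
        simpa [one_div, Function.comp_def] using tendsto_inv_atTop_zero.comp hsq
      simpa using tendsto_const_nhds.sub this
    have := ((Real.continuousAt_log one_ne_zero).tendsto).comp hb
    simpa [Function.comp_def] using this
  have key : Tendsto (fun x : ℝ => (1/2) * (x * Real.log (1 + 1/x))
      - (1/2) * (x * Real.log (1 + (-1)/x)) + (1/2) * Real.log (1 - 1/x^2) - Real.log 2)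
      atTop (nhds (1 - Real.log 2)) := by
    have := (((h1.const_mul (1/2:ℝ)).sub (h2.const_mul (1/2:ℝ))).add
      (h3.const_mul (1/2:ℝ))).sub (tendsto_const_nhds (α := ℝ) (x := Real.log 2))
    convert this using 2
    ring
  apply key.congr'
  filter_upwards [eventually_gt_atTop (1:ℝ)] with x hx
  have hx0 : (0:ℝ) < x := by linarith
  have e1 : Real.log ((x+1)/2) = Real.log (x+1) - Real.log 2 :=
    Real.log_div (by linarith) two_ne_zero
  have e2 : Real.log ((x-1)/2) = Real.log (x-1) - Real.log 2 :=
    Real.log_div (by linarith) two_ne_zero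
  have f1 : (1:ℝ) + 1/x = (x+1)/x := by field_simp
  have f2 : (1:ℝ) + (-1)/x = (x-1)/x := by field_simp; ring
  have f3 : (1:ℝ) - 1/x^2 = ((x+1)*(x-1))/x^2 := by field_simp; ring
  have g1 : Real.log (1 + 1/x) = Real.log (x+1) - Real.log x := by
    rw [f1, Real.log_div (by linarith) hx0.ne']
  have g2 : Real.log (1 + (-1)/x) = Real.log (x-1) - Real.log x := by
    rw [f2, Real.log_div (by linarith) hx0.ne']
  have g3 : Real.log (1 - 1/x^2) = Real.log (x+1) + Real.log (x-1) - 2 * Real.log x := by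
    rw [f3, Real.log_div (ne_of_gt (by nlinarith)) (ne_of_gt (by positivity)),
      Real.log_mul (by linarith) (by linarith), Real.log_pow]
    push_cast
    ring
  simp only [gfun, e1, e2, g1, g2, g3]
  ring

lemma gfun_lt {x : ℝ} (hx : 1 < x) : gfun x < 1 - Real.log 2 := by
  have hx1 : x ∈ Set.Ioi (1:ℝ) := hx
  have hx2 : x + 1 ∈ Set.Ioi (1:ℝ) := by simp [Set.mem_Ioi]; linarith
  have h1 : gfun x < gfun (x + 1) := gfun_mono hx1 hx2 (by linarith)
  have h2 : gfun (x + 1) ≤ 1 - Real.log 2 := by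
    apply ge_of_tendsto gfun_tendsto
    filter_upwards [Filter.eventually_ge_atTop (x + 1)] with y hy
    exact gfun_mono.monotoneOn hx2 (by simp [Set.mem_Ioi]; linarith) hy
  linarith

theorem stmt12 (h₁ h₂ : ℝ → ℝ)
    (hh₁ : ∀ x : ℝ, 1 < x → h₁ x =
      ((x + 1) / 2) * Real.log ((x + 1) / 2) - ((x - 1) / 2) * Real.log ((x - 1) / 2))
    (hh₂ : ∀ x : ℝ, 1 < x → h₂ x = Real.log x) :
    StrictMonoOn (fun x => h₁ x - h₂ x) (Set.Ioi 1) ∧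
    (∀ x : ℝ, 1 < x → h₁ x - h₂ x < 1 - Real.log 2) ∧
    Filter.Tendsto (fun x => h₁ x - h₂ x) Filter.atTop (nhds (1 - Real.log 2)) := by
  have heq : ∀ x : ℝ, 1 < x → h₁ x - h₂ x = gfun x := by
    intro x hx
    rw [hh₁ x hx, hh₂ x hx]
    rfl
  refine ⟨?_, ?_, ?_⟩
  · intro a ha b hb hab
    simp only
    rw [heq a ha, heq b hb]
    exact gfun_mono ha hb hab
  · intro x hx
    rw [heq x hx]
    exact gfun_lt hx
  · apply gfun_tendsto.congr'
    filter_upwards [Filter.eventually_gt_atTop (1:ℝ)] with x hx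
    exact (heq x hx).symm
end
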